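/- Let ⟨G, Eℓ⟩ be a two-player game graph with live edges and let R = {(G_1, R_1), …, (G_k, R_k)} be a Rabin chain condition, i.e. a Rabin condition satisfying R_1 ⊇ R_2 ⊇ … ⊇ R_k and G_1 ⊇ G_2 ⊇ … ⊇ G_k. With G_0 := ∅ and R_0 := ∅, define Z* := νY_0. μX_0. νY_k. μX_k. νY_{k−1}. μX_{k−1}. ⋯ νY_1. μX_1. ⋃_{j=0}^{k} C̃_j, where C̃_j := (V ∖ R_j) ∩ [ (G_j ∩ Cpre(Y_j)) ∪ Apre(Y_j, X_j) ]. Then Z* equals the winning region W of Player 0 in the fair adversarial game over ⟨G, Eℓ⟩ for the Rabin winning condition φ = ⋁_{j=1}^{k} ( ◇□(V∖R_j) ∧ □◇G_j ). Moreover, there exists a memoryless Player-0 strategy that wins the fair adversarial game for φ from every vertex of Z*. -/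

import Mathlib

/-- Least fixed point of a set transformer (Knaster–Tarski form). -/
def lfpSet {V : Type*} (f : Set V → Set V) : Set V := sInf {X | f X ⊆ X}

/-- Greatest fixed point of a set transformer (Knaster–Tarski form). -/
def gfpSet {V : Type*} (f : Set V → Set V) : Set V := sSup {X | X ⊆ f X}

/-- A two-player game graph with live edges: vertices are partitioned into
Player-0 vertices `V0` and Player-1 vertices `V1`, every vertex has a successor,
and live edges `El` are Player-1 edges. -/
structure LiveGameGraph (V : Type*) where
  V0 : Set V
  V1 : Set V
  E : V → V → Prop
  El : V → V → Prop
  cover : V0 ∪ V1 = Set.univ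
  disj : V0 ∩ V1 = ∅
  succ_nonempty : ∀ v : V, ∃ w, E v w
  live_sub : ∀ v w, El v w → v ∈ V1 ∧ E v w

namespace LiveGameGraph

variable {V : Type*}

/-- Pre∃0(S) -/
def pre0 (Gm : LiveGameGraph V) (S : Set V) : Set V :=
  {v | v ∈ Gm.V0 ∧ ∃ w, Gm.E v w ∧ w ∈ S}

/-- Pre∀1(S) -/
def pre1 (Gm : LiveGameGraph V) (S : Set V) : Set V :=
  {v | v ∈ Gm.V1 ∧ ∀ w, Gm.E v w → w ∈ S}

/-- Cpre(S) -/
def cpre (Gm : LiveGameGraph V) (S : Set V) : Set V := Gm.pre0 S ∪ Gm.pre1 S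

/-- Lpre∃(T) -/
def lpre (Gm : LiveGameGraph V) (T : Set V) : Set V :=
  {v | ∃ w, Gm.El v w ∧ w ∈ T}

/-- Apre(S,T) -/
def apre (Gm : LiveGameGraph V) (S T : Set V) : Set V :=
  Gm.cpre T ∪ (Gm.lpre T ∩ Gm.pre1 S)

end LiveGameGraph

namespace LiveGameGraph

variable {V : Type*}

/-- A play is strongly transition fair if every live edge whose source is visited
infinitely often is itself taken infinitely often. -/
def StronglyFair (Gm : LiveGameGraph V) (π : ℕ → V) : Prop :=
  ∀ v w, Gm.El v w → {i | π i = v}.Infinite → {i | π i = v ∧ π (i + 1) = w}.Infinite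

/-- A Player-0 strategy: given the history (the prefix before the current vertex)
and the current vertex, it chooses an `E`-successor whenever the current vertex
belongs to Player 0. -/
def Strategy0 (Gm : LiveGameGraph V) (ρ : List V → V → V) : Prop :=
  ∀ h v, v ∈ Gm.V0 → Gm.E v (ρ h v)

/-- A Player-1 strategy. -/
def Strategy1 (Gm : LiveGameGraph V) (ρ : List V → V → V) : Prop :=
  ∀ h v, v ∈ Gm.V1 → Gm.E v (ρ h v)

/-- The play compliant with the strategies `ρ0` and `ρ1` starting at `v0`. -/
def Compliant (Gm : LiveGameGraph V) (ρ0 ρ1 : List V → V → V) (v0 : V)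
    (π : ℕ → V) : Prop :=
  π 0 = v0 ∧ ∀ i : ℕ,
    (π i ∈ Gm.V0 → π (i + 1) = ρ0 (List.ofFn fun j : Fin i => π j.1) (π i)) ∧
    (π i ∈ Gm.V1 → π (i + 1) = ρ1 (List.ofFn fun j : Fin i => π j.1) (π i))

/-- Player 0 wins the fair adversarial game for the winning condition `φ`
from `v0` using the strategy `ρ0`. -/
def WinsFrom (Gm : LiveGameGraph V) (φ : (ℕ → V) → Prop)
    (ρ0 : List V → V → V) (v0 : V) : Prop :=
  Gm.Strategy0 ρ0 ∧ ∀ ρ1, Gm.Strategy1 ρ1 → ∀ π, Gm.Compliant ρ0 ρ1 v0 π →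
    (Gm.StronglyFair π → φ π)

/-- The winning region of Player 0 in the fair adversarial game for `φ`. -/
def WinningRegion (Gm : LiveGameGraph V) (φ : (ℕ → V) → Prop) : Set V :=
  {v0 | ∃ ρ0, Gm.WinsFrom φ ρ0 v0}

end LiveGameGraph

namespace LiveGameGraph

variable {V : Type*}

/-- The chain fixpoint νY_k.μX_k. … νY_1.μX_1 peeled off one index at a time,
from index `j` down to index `1`; `acc` is the union of the `C̃` terms for the
already-bound indices (with their bound `Y`/`X` values substituted in). -/
def chainAux (Gm : LiveGameGraph V) (Gp Rp : ℕ → Set V) : ℕ → Set V → Set V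
  | 0, acc => acc
  | j + 1, acc =>
      gfpSet fun Y => lfpSet fun X =>
        Gm.chainAux Gp Rp j
          (acc ∪ ((Rp (j + 1))ᶜ ∩ ((Gp (j + 1) ∩ Gm.cpre Y) ∪ Gm.apre Y X)))

/-- The full chain fixpoint Z̃* = νY_0.μX_0.νY_k.μX_k. … νY_1.μX_1. ⋃_j C̃_j for
pairs (G_1,R_1),…,(G_k,R_k), with the artificial pair G_0 = ∅, R_0 = ∅. -/
def chainZ (Gm : LiveGameGraph V) (Gp Rp : ℕ → Set V) (k : ℕ) : Set V :=
  gfpSet fun Y0 => lfpSet fun X0 =>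
    Gm.chainAux Gp Rp k
      (((∅ : Set V)ᶜ) ∩ (((∅ : Set V) ∩ Gm.cpre Y0) ∪ Gm.apre Y0 X0))

end LiveGameGraph


section FixBasics

open Set

variable {V : Type*}

theorem lfpSet_le {f : Set V → Set V} {S : Set V} (h : f S ⊆ S) : lfpSet f ⊆ S :=
  sInf_le h

theorem le_gfpSet {f : Set V → Set V} {S : Set V} (h : S ⊆ f S) : S ⊆ gfpSet f :=
  le_sSup h

theorem lfpSet_fixed {f : Set V → Set V} (hf : Monotone f) : f (lfpSet f) = lfpSet f := by
  have h1 : f (lfpSet f) ⊆ lfpSet f := by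
    apply le_sInf
    intro X hX
    exact (hf (lfpSet_le hX)).trans hX
  exact subset_antisymm h1 (lfpSet_le (hf h1))

theorem gfpSet_fixed {f : Set V → Set V} (hf : Monotone f) : f (gfpSet f) = gfpSet f := by
  have h1 : gfpSet f ⊆ f (gfpSet f) := by
    apply sSup_le
    intro X hX
    exact hX.trans (hf (le_gfpSet hX))
  exact subset_antisymm (le_gfpSet (hf h1)) h1

theorem lfpSet_mono {f f' : Set V → Set V} (h : ∀ S, f S ⊆ f' S) :
    lfpSet f ⊆ lfpSet f' := by
  apply le_sInf
  intro X hX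
  exact sInf_le ((h X).trans hX)

theorem gfpSet_mono {f f' : Set V → Set V} (h : ∀ S, f S ⊆ f' S) :
    gfpSet f ⊆ gfpSet f' := by
  apply sSup_le
  intro X hX
  exact le_sSup (hX.trans (h X))

theorem iterate_le_lfpSet {f : Set V → Set V} (hf : Monotone f) (n : ℕ) :
    f^[n] ∅ ⊆ lfpSet f := by
  induction n with
  | zero => simp
  | succ n ih =>
    rw [Function.iterate_succ_apply']
    calc f (f^[n] ∅) ⊆ f (lfpSet f) := hf ih
    _ = lfpSet f := lfpSet_fixed hf

theorem gfpSet_le_iterate {f : Set V → Set V} (hf : Monotone f) (n : ℕ) :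
    gfpSet f ⊆ f^[n] univ := by
  induction n with
  | zero => simp
  | succ n ih =>
    rw [Function.iterate_succ_apply']
    calc gfpSet f = f (gfpSet f) := (gfpSet_fixed hf).symm
    _ ⊆ f (f^[n] univ) := hf ih

theorem iterate_mono_n {f : Set V → Set V} (hf : Monotone f) :
    Monotone (fun n => f^[n] (∅ : Set V)) := by
  apply monotone_nat_of_le_succ
  intro n
  induction n with
  | zero => simp
  | succ n ih =>
    simp only [Function.iterate_succ_apply'] at *
    exact hf ih

theorem iterate_anti_n {f : Set V → Set V} (hf : Monotone f) :
    Antitone (fun n => f^[n] (univ : Set V)) := by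
  apply antitone_nat_of_succ_le
  intro n
  induction n with
  | zero => simp
  | succ n ih =>
    simp only [Function.iterate_succ_apply'] at *
    exact hf ih

/-- On a finite type, increasing iteration from `∅` stabilizes by `card V`. -/
theorem lfpSet_eq_iterate [Fintype V] {f : Set V → Set V} (hf : Monotone f) :
    lfpSet f = f^[Fintype.card V] ∅ := by
  classical
  -- there is n ≤ card with f^[n+1] ∅ = f^[n] ∅
  have key : ∃ n ≤ Fintype.card V, f^[n+1] ∅ = f^[n] ∅ := by
    by_contra hcon
    push_neg at hcon
    have hcard : ∀ n ≤ Fintype.card V + 1, n ≤ (f^[n] (∅ : Set V)).toFinset.card := by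
      intro n hn
      induction n with
      | zero => simp
      | succ n ih =>
        have hne : f^[n+1] (∅:Set V) ≠ f^[n] ∅ := hcon n (by omega)
        have hsub : f^[n] (∅:Set V) ⊆ f^[n+1] ∅ := iterate_mono_n hf (Nat.le_succ n)
        have : (f^[n] (∅:Set V)).toFinset ⊂ (f^[n+1] (∅:Set V)).toFinset := by
          rw [Set.toFinset_ssubset_toFinset]
          exact ssubset_of_subset_of_ne hsub (Ne.symm hne)
        have := Finset.card_lt_card this
        have := ih (by omega)
        omega
    have h1 := hcard (Fintype.card V + 1) le_rfl
    have h2 : (f^[Fintype.card V + 1] (∅:Set V)).toFinset.card ≤ Fintype.card V :=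
      Finset.card_le_univ _
    have := h1.trans h2
    omega
  obtain ⟨n, hn, hfix⟩ := key
  have hfixed : f (f^[n] (∅:Set V)) = f^[n] ∅ := by
    have := hfix
    rwa [Function.iterate_succ_apply'] at this
  have hstab : ∀ m, n ≤ m → f^[m] (∅:Set V) = f^[n] ∅ := by
    intro m hm
    induction m with
    | zero => rw [Nat.le_zero.mp hm]
    | succ m ih =>
      rcases Nat.lt_or_ge n (m+1) with h | h
      · have hnm : n ≤ m := by omega
        rw [Function.iterate_succ_apply', ih hnm, hfixed]
      · have : n = m + 1 := by omega
        rw [this]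
  apply subset_antisymm
  · rw [hstab (Fintype.card V) hn]
    exact lfpSet_le hfixed.le
  · exact iterate_le_lfpSet hf _

/-- On a finite type, decreasing iteration from `univ` stabilizes by `card V`. -/
theorem gfpSet_eq_iterate [Fintype V] {f : Set V → Set V} (hf : Monotone f) :
    gfpSet f = f^[Fintype.card V] univ := by
  classical
  have key : ∃ n ≤ Fintype.card V, f^[n+1] univ = f^[n] univ := by
    by_contra hcon
    push_neg at hcon
    have hcard : ∀ n ≤ Fintype.card V + 1,
        n ≤ ((f^[n] (univ : Set V))ᶜ).toFinset.card := by
      intro n hn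
      induction n with
      | zero => simp
      | succ n ih =>
        have hne : f^[n+1] (univ:Set V) ≠ f^[n] univ := hcon n (by omega)
        have hsub : f^[n+1] (univ:Set V) ⊆ f^[n] univ := iterate_anti_n hf (Nat.le_succ n)
        have : ((f^[n] (univ:Set V))ᶜ).toFinset ⊂ ((f^[n+1] (univ:Set V))ᶜ).toFinset := by
          rw [Set.toFinset_ssubset_toFinset]
          refine ssubset_of_subset_of_ne (Set.compl_subset_compl.2 hsub) ?_
          intro hcq
          exact hne (by
            have := congrArg compl hcq
            simpa using this.symm)
        have := Finset.card_lt_card this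
        have := ih (by omega)
        omega
    have h1 := hcard (Fintype.card V + 1) le_rfl
    have h2 : (((f^[Fintype.card V + 1] (univ:Set V))ᶜ)).toFinset.card ≤ Fintype.card V :=
      Finset.card_le_univ _
    have := h1.trans h2
    omega
  obtain ⟨n, hn, hfix⟩ := key
  have hfixed : f (f^[n] (univ:Set V)) = f^[n] univ := by
    have := hfix
    rwa [Function.iterate_succ_apply'] at this
  have hstab : ∀ m, n ≤ m → f^[m] (univ:Set V) = f^[n] univ := by
    intro m hm
    induction m with
    | zero => rw [Nat.le_zero.mp hm]
    | succ m ih =>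
      rcases Nat.lt_or_ge n (m+1) with h | h
      · have hnm : n ≤ m := by omega
        rw [Function.iterate_succ_apply', ih hnm, hfixed]
      · have : n = m + 1 := by omega
        rw [this]
  apply subset_antisymm
  · exact gfpSet_le_iterate hf _
  · rw [hstab (Fintype.card V) hn]
    exact le_gfpSet hfixed.ge

end FixBasics

namespace LiveGameGraph

open Set

variable {V : Type*} (Gm : LiveGameGraph V) (g r : ℕ → Set V)

theorem pre0_mono {S S' : Set V} (h : S ⊆ S') : Gm.pre0 S ⊆ Gm.pre0 S' := by
  rintro v ⟨h0, w, he, hw⟩; exact ⟨h0, w, he, h hw⟩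

theorem pre1_mono {S S' : Set V} (h : S ⊆ S') : Gm.pre1 S ⊆ Gm.pre1 S' := by
  rintro v ⟨h1, hall⟩; exact ⟨h1, fun w hw => h (hall w hw)⟩

theorem cpre_mono {S S' : Set V} (h : S ⊆ S') : Gm.cpre S ⊆ Gm.cpre S' :=
  Set.union_subset_union (Gm.pre0_mono h) (Gm.pre1_mono h)

theorem lpre_mono {S S' : Set V} (h : S ⊆ S') : Gm.lpre S ⊆ Gm.lpre S' := by
  rintro v ⟨w, he, hw⟩; exact ⟨w, he, h hw⟩

theorem apre_mono {Y Y' X X' : Set V} (hY : Y ⊆ Y') (hX : X ⊆ X') :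
    Gm.apre Y X ⊆ Gm.apre Y' X' :=
  Set.union_subset_union (Gm.cpre_mono hX)
    (Set.inter_subset_inter (Gm.lpre_mono hX) (Gm.pre1_mono hY))

/-- The `C̃`-term of the chain fixpoint. -/
def Cterm (Y X : Set V) (m : ℕ) : Set V :=
  (r m)ᶜ ∩ ((g m ∩ Gm.cpre Y) ∪ Gm.apre Y X)

theorem Cterm_mono {Y Y' X X' : Set V} (m : ℕ) (hY : Y ⊆ Y') (hX : X ⊆ X') :
    Gm.Cterm g r Y X m ⊆ Gm.Cterm g r Y' X' m :=
  Set.inter_subset_inter subset_rfl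
    (Set.union_subset_union (Set.inter_subset_inter subset_rfl (Gm.cpre_mono hY))
      (Gm.apre_mono hY hX))

theorem chainAux_zero (acc : Set V) : Gm.chainAux g r 0 acc = acc := rfl

theorem chainAux_succ (j : ℕ) (acc : Set V) :
    Gm.chainAux g r (j+1) acc =
      gfpSet fun Y => lfpSet fun X =>
        Gm.chainAux g r j (acc ∪ Gm.Cterm g r Y X (j+1)) := rfl

theorem chainAux_mono (j : ℕ) {acc acc' : Set V} (h : acc ⊆ acc') :
    Gm.chainAux g r j acc ⊆ Gm.chainAux g r j acc' := by
  induction j generalizing acc acc' with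
  | zero => exact h
  | succ j ih =>
    rw [chainAux_succ, chainAux_succ]
    apply gfpSet_mono
    intro Y
    apply lfpSet_mono
    intro X
    exact ih (Set.union_subset_union h subset_rfl)

theorem chainAux_innerX_mono (j m : ℕ) (acc Y : Set V) :
    Monotone (fun X => Gm.chainAux g r j (acc ∪ Gm.Cterm g r Y X m)) := by
  intro X X' h
  exact Gm.chainAux_mono g r j
    (Set.union_subset_union subset_rfl (Gm.Cterm_mono g r m subset_rfl h))

theorem chainAux_innerY_mono (j m : ℕ) (acc : Set V) :
    Monotone (fun Y => lfpSet fun X => Gm.chainAux g r j (acc ∪ Gm.Cterm g r Y X m)) := by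
  intro Y Y' h
  apply lfpSet_mono
  intro X
  exact Gm.chainAux_mono g r j
    (Set.union_subset_union subset_rfl (Gm.Cterm_mono g r m h subset_rfl))

/-- Key unfolding: at the `ν`-fixpoint, the value is the inner `μ`-fixpoint with
the outer variable plugged in. -/
theorem chainAux_KU (j : ℕ) (acc : Set V) :
    Gm.chainAux g r (j+1) acc =
      lfpSet (fun X => Gm.chainAux g r j
        (acc ∪ Gm.Cterm g r (Gm.chainAux g r (j+1) acc) X (j+1))) := by
  conv_lhs => rw [chainAux_succ]
  conv_lhs => rw [← gfpSet_fixed (Gm.chainAux_innerY_mono g r j (j+1) acc)]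
  rw [← chainAux_succ]

/-- Stage sets of the inner `μ`-fixpoint at level `j+1`. -/
def pstg (j : ℕ) (acc : Set V) (n : ℕ) : Set V :=
  (fun X => Gm.chainAux g r j
    (acc ∪ Gm.Cterm g r (Gm.chainAux g r (j+1) acc) X (j+1)))^[n] ∅

theorem pstg_zero (j : ℕ) (acc : Set V) : Gm.pstg g r j acc 0 = ∅ := rfl

theorem pstg_succ (j : ℕ) (acc : Set V) (n : ℕ) :
    Gm.pstg g r j acc (n+1) =
      Gm.chainAux g r j
        (acc ∪ Gm.Cterm g r (Gm.chainAux g r (j+1) acc) (Gm.pstg g r j acc n) (j+1)) := by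
  unfold pstg
  rw [Function.iterate_succ_apply']

theorem pstg_le_A (j : ℕ) (acc : Set V) (n : ℕ) :
    Gm.pstg g r j acc n ⊆ Gm.chainAux g r (j+1) acc := by
  rw [Gm.chainAux_KU g r j acc]
  exact iterate_le_lfpSet (Gm.chainAux_innerX_mono g r j (j+1) acc _) n

theorem pstg_mono_n (j : ℕ) (acc : Set V) : Monotone (Gm.pstg g r j acc) :=
  iterate_mono_n (Gm.chainAux_innerX_mono g r j (j+1) acc _)

theorem A_eq_pstg [Fintype V] (j : ℕ) (acc : Set V) :
    Gm.chainAux g r (j+1) acc = Gm.pstg g r j acc (Fintype.card V) := by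
  rw [Gm.chainAux_KU g r j acc]
  exact lfpSet_eq_iterate (Gm.chainAux_innerX_mono g r j (j+1) acc _)

/-- Dual stage sets: iterates of the `ν`-map at level `j+1` from `univ`. -/
def dstg (j : ℕ) (acc : Set V) (n : ℕ) : Set V :=
  (fun Y => lfpSet fun X =>
    Gm.chainAux g r j (acc ∪ Gm.Cterm g r Y X (j+1)))^[n] univ

theorem dstg_zero (j : ℕ) (acc : Set V) : Gm.dstg g r j acc 0 = univ := rfl

theorem dstg_succ (j : ℕ) (acc : Set V) (n : ℕ) :
    Gm.dstg g r j acc (n+1) =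
      lfpSet (fun X => Gm.chainAux g r j
        (acc ∪ Gm.Cterm g r (Gm.dstg g r j acc n) X (j+1))) := by
  unfold dstg
  rw [Function.iterate_succ_apply']

theorem A_le_dstg (j : ℕ) (acc : Set V) (n : ℕ) :
    Gm.chainAux g r (j+1) acc ⊆ Gm.dstg g r j acc n := by
  rw [Gm.chainAux_succ g r j acc]
  exact gfpSet_le_iterate (Gm.chainAux_innerY_mono g r j (j+1) acc) n

theorem dstg_anti_n (j : ℕ) (acc : Set V) : Antitone (Gm.dstg g r j acc) :=
  iterate_anti_n (Gm.chainAux_innerY_mono g r j (j+1) acc)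

theorem A_eq_dstg [Fintype V] (j : ℕ) (acc : Set V) :
    Gm.chainAux g r (j+1) acc = Gm.dstg g r j acc (Fintype.card V) := by
  rw [Gm.chainAux_succ g r j acc]
  exact gfpSet_eq_iterate (Gm.chainAux_innerY_mono g r j (j+1) acc)

end LiveGameGraph

set_option linter.unusedSectionVars false
section DownInduct

/-- Downward induction from `K`. -/
theorem down_induct {K : ℕ} (P : ℕ → Prop) (hK : P K)
    (hstep : ∀ ℓ, ℓ < K → P (ℓ+1) → P ℓ) : ∀ ℓ, ℓ ≤ K → P ℓ := by
  have key : ∀ d ℓ, ℓ + d = K → P ℓ := by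
    intro d
    induction d with
    | zero => intro ℓ h; have : ℓ = K := by omega
              rw [this]; exact hK
    | succ d ih =>
      intro ℓ h
      exact hstep ℓ (by omega) (ih (ℓ+1) (by omega))
  intro ℓ hℓ
  exact key (K - ℓ) ℓ (by omega)

end DownInduct

namespace LiveGameGraph

open Set

variable {V : Type*} [Fintype V] (Gm : LiveGameGraph V) (g r : ℕ → Set V) (K : ℕ)

/-- The primal thread accumulator of a vertex, from level `K` down. -/
noncomputable def accAt (ℓ : ℕ) (v : V) : Set V :=
  if _h : K ≤ ℓ then ∅
  else
    accAt (ℓ+1) v ∪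
      Gm.Cterm g r (Gm.chainAux g r (ℓ+1) (accAt (ℓ+1) v))
        (Gm.pstg g r ℓ (accAt (ℓ+1) v)
          (sInf {n | v ∈ Gm.pstg g r ℓ (accAt (ℓ+1) v) n} - 1)) (ℓ+1)
  termination_by K - ℓ
  decreasing_by omega

/-- The primal stage (μ-rank) of `v` at level `ℓ+1` along its own thread. -/
noncomputable def pbc (ℓ : ℕ) (v : V) : ℕ :=
  sInf {n | v ∈ Gm.pstg g r ℓ (Gm.accAt g r K (ℓ+1) v) n}

theorem accAt_ge {ℓ : ℕ} (h : K ≤ ℓ) (v : V) : Gm.accAt g r K ℓ v = ∅ := by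
  rw [accAt, dif_pos h]

theorem accAt_lt {ℓ : ℕ} (h : ℓ < K) (v : V) :
    Gm.accAt g r K ℓ v =
      Gm.accAt g r K (ℓ+1) v ∪
        Gm.Cterm g r (Gm.chainAux g r (ℓ+1) (Gm.accAt g r K (ℓ+1) v))
          (Gm.pstg g r ℓ (Gm.accAt g r K (ℓ+1) v) (Gm.pbc g r K ℓ v - 1)) (ℓ+1) := by
  conv_lhs => rw [accAt]
  rw [dif_neg (by omega)]
  rfl

theorem pbc_le (ℓ : ℕ) (v : V) : Gm.pbc g r K ℓ v ≤ Fintype.card V := by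
  rcases Set.eq_empty_or_nonempty {n | v ∈ Gm.pstg g r ℓ (Gm.accAt g r K (ℓ+1) v) n} with h | h
  · rw [pbc, h]; simp [Nat.sInf_empty]
  · obtain ⟨n, hn⟩ := h
    apply Nat.sInf_le
    have : v ∈ Gm.chainAux g r (ℓ+1) (Gm.accAt g r K (ℓ+1) v) :=
      Gm.pstg_le_A g r ℓ _ n hn
    rw [Gm.A_eq_pstg g r ℓ] at this
    exact this

/-- Unfolding of the thread value at level `ℓ`. -/
theorem AU {ℓ : ℕ} (h : ℓ < K) (v : V) :
    Gm.chainAux g r ℓ (Gm.accAt g r K ℓ v) =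
      Gm.pstg g r ℓ (Gm.accAt g r K (ℓ+1) v) ((Gm.pbc g r K ℓ v - 1) + 1) := by
  rw [Gm.accAt_lt g r K h v, Gm.pstg_succ]

theorem INV_step {ℓ : ℕ} (h : ℓ < K) (v : V)
    (hv : v ∈ Gm.chainAux g r (ℓ+1) (Gm.accAt g r K (ℓ+1) v)) :
    v ∈ Gm.chainAux g r ℓ (Gm.accAt g r K ℓ v) ∧ 1 ≤ Gm.pbc g r K ℓ v := by
  have hne : v ∈ Gm.pstg g r ℓ (Gm.accAt g r K (ℓ+1) v) (Fintype.card V) := by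
    rw [← Gm.A_eq_pstg g r ℓ]; exact hv
  have hmem : Gm.pbc g r K ℓ v ∈ {n | v ∈ Gm.pstg g r ℓ (Gm.accAt g r K (ℓ+1) v) n} := by
    rw [pbc]
    exact Nat.sInf_mem ⟨Fintype.card V, hne⟩
  have hmem' : v ∈ Gm.pstg g r ℓ (Gm.accAt g r K (ℓ+1) v) (Gm.pbc g r K ℓ v) := hmem
  have hpos : 1 ≤ Gm.pbc g r K ℓ v := by
    by_contra hc
    have h0 : Gm.pbc g r K ℓ v = 0 := by omega
    rw [h0, Gm.pstg_zero] at hmem'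
    exact hmem' 
  constructor
  · rw [Gm.AU g r K h v]
    have : Gm.pbc g r K ℓ v - 1 + 1 = Gm.pbc g r K ℓ v := by omega
    rw [this]; exact hmem'
  · exact hpos

theorem INV (v : V) (hv : v ∈ Gm.chainAux g r K ∅) :
    ∀ ℓ, ℓ ≤ K → v ∈ Gm.chainAux g r ℓ (Gm.accAt g r K ℓ v) := by
  apply down_induct
  · rw [Gm.accAt_ge g r K le_rfl]; exact hv
  · intro ℓ h ih
    exact (Gm.INV_step g r K h v ih).1

theorem pbc_pos (v : V) (hv : v ∈ Gm.chainAux g r K ∅) {ℓ : ℕ} (h : ℓ < K) :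
    1 ≤ Gm.pbc g r K ℓ v :=
  (Gm.INV_step g r K h v (Gm.INV g r K v hv (ℓ+1) h)).2

theorem CU_step {ℓ : ℕ} (h : ℓ < K) (v : V) :
    Gm.chainAux g r ℓ (Gm.accAt g r K ℓ v) ⊆
      Gm.chainAux g r (ℓ+1) (Gm.accAt g r K (ℓ+1) v) := by
  rw [Gm.AU g r K h v]
  exact Gm.pstg_le_A g r ℓ _ _

theorem CU (v : V) : ∀ ℓ, ℓ ≤ K →
    Gm.chainAux g r ℓ (Gm.accAt g r K ℓ v) ⊆ Gm.chainAux g r K ∅ := by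
  apply down_induct
  · rw [Gm.accAt_ge g r K le_rfl]
  · intro ℓ h ih
    exact (Gm.CU_step g r K h v).trans ih

/-- Code (base `card+1`) of the stage digits of `v` at levels above `ℓ`. -/
noncomputable def cP (ℓ : ℕ) (v : V) : ℕ :=
  if _h : K ≤ ℓ then 0
  else cP (ℓ+1) v * (Fintype.card V + 1) + Gm.pbc g r K ℓ v
  termination_by K - ℓ
  decreasing_by omega

theorem cP_ge {ℓ : ℕ} (h : K ≤ ℓ) (v : V) : Gm.cP g r K ℓ v = 0 := by
  rw [cP, dif_pos h]

theorem cP_lt {ℓ : ℕ} (h : ℓ < K) (v : V) :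
    Gm.cP g r K ℓ v = Gm.cP g r K (ℓ+1) v * (Fintype.card V + 1) + Gm.pbc g r K ℓ v := by
  conv_lhs => rw [cP]
  rw [dif_neg (by omega)]

theorem PROJ_step {ℓ : ℕ} (h : ℓ < K) (v w : V)
    (hle : Gm.cP g r K ℓ w ≤ Gm.cP g r K ℓ v) :
    Gm.cP g r K (ℓ+1) w ≤ Gm.cP g r K (ℓ+1) v := by
  rw [Gm.cP_lt g r K h v, Gm.cP_lt g r K h w] at hle
  by_contra hc
  push_neg at hc
  have h1 : Gm.cP g r K (ℓ+1) v + 1 ≤ Gm.cP g r K (ℓ+1) w := hc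
  have h2 : (Gm.cP g r K (ℓ+1) v + 1) * (Fintype.card V + 1) ≤
      Gm.cP g r K (ℓ+1) w * (Fintype.card V + 1) :=
    Nat.mul_le_mul_right _ h1
  have h3 := Gm.pbc_le g r K ℓ v
  have h4 := Gm.pbc_le g r K ℓ w
  nlinarith

theorem PROJ (v w : V) : ∀ ℓ ℓ', ℓ ≤ ℓ' →
    Gm.cP g r K ℓ w ≤ Gm.cP g r K ℓ v → Gm.cP g r K ℓ' w ≤ Gm.cP g r K ℓ' v := by
  intro ℓ ℓ' hll
  induction ℓ' with
  | zero => have : ℓ = 0 := by omega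
            rw [this]; exact id
  | succ m ih =>
    intro hle
    rcases Nat.lt_or_ge ℓ (m+1) with h | h
    · rcases Nat.lt_or_ge m K with hmK | hmK
      · exact Gm.PROJ_step g r K hmK v w (ih (by omega) hle)
      · rw [Gm.cP_ge g r K (by omega) v, Gm.cP_ge g r K (by omega) w]
    · have : ℓ = m + 1 := by omega
      rw [← this]; exact hle

/-- The central comparison lemma: membership in the thread value of `v` at level `ℓ`
bounds the code, with thread agreement at equality. -/
theorem CMP (v : V) (hv : v ∈ Gm.chainAux g r K ∅) :
    ∀ d ℓ, ℓ + d = K → ∀ w, w ∈ Gm.chainAux g r ℓ (Gm.accAt g r K ℓ v) →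
      Gm.cP g r K ℓ w ≤ Gm.cP g r K ℓ v ∧
        (Gm.cP g r K ℓ w = Gm.cP g r K ℓ v → Gm.accAt g r K ℓ w = Gm.accAt g r K ℓ v) := by
  intro d
  induction d with
  | zero =>
    intro ℓ hd w _hw
    have hK : K ≤ ℓ := by omega
    rw [Gm.cP_ge g r K hK, Gm.cP_ge g r K hK,
      Gm.accAt_ge g r K hK, Gm.accAt_ge g r K hK]
    simp
  | succ d ih =>
    intro ℓ hd w hw
    have hlt : ℓ < K := by omega
    have hbc1 : 1 ≤ Gm.pbc g r K ℓ v := Gm.pbc_pos g r K v hv hlt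
    have hw1 : w ∈ Gm.pstg g r ℓ (Gm.accAt g r K (ℓ+1) v) (Gm.pbc g r K ℓ v) := by
      rw [Gm.AU g r K hlt v] at hw
      have : Gm.pbc g r K ℓ v - 1 + 1 = Gm.pbc g r K ℓ v := by omega
      rwa [this] at hw
    have hw2 : w ∈ Gm.chainAux g r (ℓ+1) (Gm.accAt g r K (ℓ+1) v) :=
      Gm.pstg_le_A g r ℓ _ _ hw1
    obtain ⟨ih1, ih2⟩ := ih (ℓ+1) (by omega) w hw2
    rcases lt_or_eq_of_le ih1 with hlt2 | heq
    · -- strictly smaller high part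
      have harith : Gm.cP g r K ℓ w < Gm.cP g r K ℓ v := by
        rw [Gm.cP_lt g r K hlt v, Gm.cP_lt g r K hlt w]
        have h1 : Gm.cP g r K (ℓ+1) w + 1 ≤ Gm.cP g r K (ℓ+1) v := hlt2
        have h2 : (Gm.cP g r K (ℓ+1) w + 1) * (Fintype.card V + 1) ≤
            Gm.cP g r K (ℓ+1) v * (Fintype.card V + 1) := Nat.mul_le_mul_right _ h1
        have h3 := Gm.pbc_le g r K ℓ w
        nlinarith
      exact ⟨harith.le, fun hc => absurd hc (by omega)⟩
    · have hacc : Gm.accAt g r K (ℓ+1) w = Gm.accAt g r K (ℓ+1) v := ih2 heq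
      have hple : Gm.pbc g r K ℓ w ≤ Gm.pbc g r K ℓ v := by
        apply Nat.sInf_le
        show w ∈ Gm.pstg g r ℓ (Gm.accAt g r K (ℓ+1) w) (Gm.pbc g r K ℓ v)
        rw [hacc]
        exact hw1
      constructor
      · rw [Gm.cP_lt g r K hlt v, Gm.cP_lt g r K hlt w, heq]
        omega
      · intro hceq
        have hpeq : Gm.pbc g r K ℓ w = Gm.pbc g r K ℓ v := by
          rw [Gm.cP_lt g r K hlt v, Gm.cP_lt g r K hlt w, heq] at hceq
          omega
        rw [Gm.accAt_lt g r K hlt v, Gm.accAt_lt g r K hlt w, hacc, hpeq]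

/-- Comparison against an explicit stage of `v`'s thread: strict form. -/
theorem CMPS (v : V) (hv : v ∈ Gm.chainAux g r K ∅) {ℓ : ℕ} (hlt : ℓ < K) (w : V)
    (t : ℕ) (hw : w ∈ Gm.pstg g r ℓ (Gm.accAt g r K (ℓ+1) v) t) :
    Gm.cP g r K ℓ w ≤ Gm.cP g r K (ℓ+1) v * (Fintype.card V + 1) + t := by
  have hw2 : w ∈ Gm.chainAux g r (ℓ+1) (Gm.accAt g r K (ℓ+1) v) :=
    Gm.pstg_le_A g r ℓ _ _ hw
  obtain ⟨ih1, ih2⟩ := Gm.CMP g r K v hv (K - (ℓ+1)) (ℓ+1) (by omega) w hw2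
  rcases lt_or_eq_of_le ih1 with hlt2 | heq
  · rw [Gm.cP_lt g r K hlt w]
    have h1 : Gm.cP g r K (ℓ+1) w + 1 ≤ Gm.cP g r K (ℓ+1) v := hlt2
    have h2 : (Gm.cP g r K (ℓ+1) w + 1) * (Fintype.card V + 1) ≤
        Gm.cP g r K (ℓ+1) v * (Fintype.card V + 1) := Nat.mul_le_mul_right _ h1
    have h3 := Gm.pbc_le g r K ℓ w
    nlinarith
  · have hacc : Gm.accAt g r K (ℓ+1) w = Gm.accAt g r K (ℓ+1) v := ih2 heq
    have hple : Gm.pbc g r K ℓ w ≤ t := by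
      apply Nat.sInf_le
      show w ∈ Gm.pstg g r ℓ (Gm.accAt g r K (ℓ+1) w) t
      rw [hacc]
      exact hw
    rw [Gm.cP_lt g r K hlt w, heq]
    omega

/-- Comparison for the thread value itself (the `Y`-target). -/
theorem CMPY (v : V) (hv : v ∈ Gm.chainAux g r K ∅) {ℓ : ℕ} (hle : ℓ ≤ K) (w : V)
    (hw : w ∈ Gm.chainAux g r ℓ (Gm.accAt g r K ℓ v)) :
    Gm.cP g r K ℓ w ≤ Gm.cP g r K ℓ v :=
  (Gm.CMP g r K v hv (K - ℓ) ℓ (by omega) w hw).1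

/-- Comparison for the `X`-target (strict decrease of the code at level `ℓ`). -/
theorem CMPX (v : V) (hv : v ∈ Gm.chainAux g r K ∅) {ℓ : ℕ} (hlt : ℓ < K) (w : V)
    (hw : w ∈ Gm.pstg g r ℓ (Gm.accAt g r K (ℓ+1) v) (Gm.pbc g r K ℓ v - 1)) :
    Gm.cP g r K ℓ w < Gm.cP g r K ℓ v := by
  have h1 := Gm.CMPS g r K v hv hlt w _ hw
  have h2 : 1 ≤ Gm.pbc g r K ℓ v := Gm.pbc_pos g r K v hv hlt
  rw [Gm.cP_lt g r K hlt v]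
  omega

end LiveGameGraph


namespace LiveGameGraph

open Set Classical

variable {V : Type*} [Fintype V] (Gm : LiveGameGraph V) (g r : ℕ → Set V) (K : ℕ)

theorem CU_range (v : V) {ℓ ℓ' : ℕ} (h : ℓ ≤ ℓ') (h' : ℓ' ≤ K) :
    Gm.chainAux g r ℓ (Gm.accAt g r K ℓ v) ⊆
      Gm.chainAux g r ℓ' (Gm.accAt g r K ℓ' v) := by
  induction ℓ' with
  | zero => have : ℓ = 0 := by omega
            rw [this]
  | succ m ih =>
    rcases Nat.lt_or_ge ℓ (m+1) with hc | hc
    · exact (ih (by omega) (by omega)).trans (Gm.CU_step g r K (by omega) v)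
    · have : ℓ = m+1 := by omega
      rw [this]

theorem BOT (v : V) (hv : v ∈ Gm.chainAux g r K ∅) :
    ∃ m, m < K ∧
      v ∈ Gm.Cterm g r (Gm.chainAux g r (m+1) (Gm.accAt g r K (m+1) v))
        (Gm.pstg g r m (Gm.accAt g r K (m+1) v) (Gm.pbc g r K m v - 1)) (m+1) := by
  have h0 : v ∈ Gm.accAt g r K 0 v := by
    have := Gm.INV g r K v hv 0 (Nat.zero_le K)
    rwa [Gm.chainAux_zero] at this
  -- peel the union
  have main : ∀ ℓ, ℓ ≤ K → v ∈ Gm.accAt g r K ℓ v → ∃ m, m < K ∧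
      v ∈ Gm.Cterm g r (Gm.chainAux g r (m+1) (Gm.accAt g r K (m+1) v))
        (Gm.pstg g r m (Gm.accAt g r K (m+1) v) (Gm.pbc g r K m v - 1)) (m+1) := by
    apply down_induct
    · rw [Gm.accAt_ge g r K le_rfl]
      intro h
      exact absurd h (Set.notMem_empty v)
    · intro ℓ hℓ ih hmem
      rw [Gm.accAt_lt g r K hℓ v] at hmem
      rcases hmem with hmem | hmem
      · exact ih hmem
      · exact ⟨ℓ, hℓ, hmem⟩
  exact main 0 (Nat.zero_le K) h0

/-- The active level (minus one) of a vertex of `Z`. -/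
noncomputable def actm (v : V) : ℕ :=
  if hv : v ∈ Gm.chainAux g r K ∅ then choose (Gm.BOT g r K v hv) else 0

/-- The `Y`-target of the active term. -/
noncomputable def Yt (v : V) : Set V :=
  Gm.chainAux g r (Gm.actm g r K v + 1) (Gm.accAt g r K (Gm.actm g r K v + 1) v)

/-- The `X`-target of the active term. -/
noncomputable def Xt (v : V) : Set V :=
  Gm.pstg g r (Gm.actm g r K v) (Gm.accAt g r K (Gm.actm g r K v + 1) v)
    (Gm.pbc g r K (Gm.actm g r K v) v - 1)

theorem actm_spec (v : V) (hv : v ∈ Gm.chainAux g r K ∅) :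
    Gm.actm g r K v < K ∧
      v ∈ Gm.Cterm g r (Gm.Yt g r K v) (Gm.Xt g r K v) (Gm.actm g r K v + 1) := by
  rw [Yt, Xt, actm, dif_pos hv]
  exact choose_spec (Gm.BOT g r K v hv)

theorem actm_lt (v : V) (hv : v ∈ Gm.chainAux g r K ∅) : Gm.actm g r K v < K :=
  (Gm.actm_spec g r K v hv).1

theorem Ravoid (v : V) (hv : v ∈ Gm.chainAux g r K ∅) : v ∉ r (Gm.actm g r K v + 1) :=
  (Gm.actm_spec g r K v hv).2.1

theorem Xt_le_Yt (v : V) : Gm.Xt g r K v ⊆ Gm.Yt g r K v :=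
  Gm.pstg_le_A g r _ _ _

theorem Yt_le_Z (v : V) (hv : v ∈ Gm.chainAux g r K ∅) :
    Gm.Yt g r K v ⊆ Gm.chainAux g r K ∅ :=
  Gm.CU g r K v (Gm.actm g r K v + 1) (Gm.actm_lt g r K v hv)

/-- not in V0 and V1 simultaneously -/
theorem not_both (v : V) (h0 : v ∈ Gm.V0) (h1 : v ∈ Gm.V1) : False := by
  have := Gm.disj
  have : v ∈ Gm.V0 ∩ Gm.V1 := ⟨h0, h1⟩
  rw [Gm.disj] at this
  exact this

theorem V0_or_V1 (v : V) : v ∈ Gm.V0 ∨ v ∈ Gm.V1 := by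
  have : v ∈ Gm.V0 ∪ Gm.V1 := by rw [Gm.cover]; trivial
  exact this

/-- Branch predicate: progress branch. -/
def branchP (v : V) : Prop := v ∈ Gm.cpre (Gm.Xt g r K v)

/-- Branch predicate: G branch (given not P). -/
def branchG (v : V) : Prop :=
  v ∈ g (Gm.actm g r K v + 1) ∩ Gm.cpre (Gm.Yt g r K v)

theorem branch_total (v : V) (hv : v ∈ Gm.chainAux g r K ∅) :
    Gm.branchP g r K v ∨ Gm.branchG g r K v ∨
      (v ∈ Gm.lpre (Gm.Xt g r K v) ∧ v ∈ Gm.pre1 (Gm.Yt g r K v)) := by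
  have h := (Gm.actm_spec g r K v hv).2.2
  rcases h with h | h
  · exact Or.inr (Or.inl h)
  · rcases h with h | h
    · exact Or.inl h
    · exact Or.inr (Or.inr h)

/-- The uniform one-step target of the memoryless strategy. -/
noncomputable def PTgt (v : V) : Set V :=
  if Gm.branchP g r K v then Gm.Xt g r K v else Gm.Yt g r K v

theorem PTgt_le_Yt (v : V) : Gm.PTgt g r K v ⊆ Gm.Yt g r K v := by
  rw [PTgt]
  split
  · exact Gm.Xt_le_Yt g r K v
  · exact subset_rfl

theorem PTgt_le_Z (v : V) (hv : v ∈ Gm.chainAux g r K ∅) :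
    Gm.PTgt g r K v ⊆ Gm.chainAux g r K ∅ :=
  (Gm.PTgt_le_Yt g r K v).trans (Gm.Yt_le_Z g r K v hv)

/-- Code control of the uniform target. -/
theorem PTgt_code (v : V) (hv : v ∈ Gm.chainAux g r K ∅) {j : ℕ}
    (hj : Gm.actm g r K v < j) (hjK : j ≤ K) (w : V) (hw : w ∈ Gm.PTgt g r K v) :
    Gm.cP g r K j w ≤ Gm.cP g r K j v := by
  have h1 : w ∈ Gm.chainAux g r (Gm.actm g r K v + 1)
      (Gm.accAt g r K (Gm.actm g r K v + 1) v) := Gm.PTgt_le_Yt g r K v hw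
  exact Gm.CMPY g r K v hv hjK w (Gm.CU_range g r K v hj hjK h1)

/-- Strict code decrease for the `X`-target. -/
theorem Xt_code (v : V) (hv : v ∈ Gm.chainAux g r K ∅) (w : V) (hw : w ∈ Gm.Xt g r K v) :
    Gm.cP g r K (Gm.actm g r K v) w < Gm.cP g r K (Gm.actm g r K v) v :=
  Gm.CMPX g r K v hv (Gm.actm_lt g r K v hv) w hw

theorem sig_ex (v : V) (hv : v ∈ Gm.chainAux g r K ∅) (h0 : v ∈ Gm.V0) :
    ∃ w, Gm.E v w ∧ w ∈ Gm.PTgt g r K v := by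
  rw [PTgt]
  split
  case isTrue hP =>
    rcases hP with hP | hP
    · obtain ⟨_, w, he, hw⟩ := hP
      exact ⟨w, he, hw⟩
    · exact absurd h0 (fun h => Gm.not_both v h hP.1)
  case isFalse hP =>
    rcases Gm.branch_total g r K v hv with h | h | h
    · exact absurd h hP
    · rcases h.2 with hc | hc
      · obtain ⟨_, w, he, hw⟩ := hc
        exact ⟨w, he, hw⟩
      · exact absurd h0 (fun h' => Gm.not_both v h' hc.1)
    · exact absurd h0 (fun h' => Gm.not_both v h' h.2.1)

/-- The memoryless Player-0 strategy. -/
noncomputable def sig (v : V) : V :=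
  if hv : v ∈ Gm.chainAux g r K ∅ ∧ v ∈ Gm.V0 then
    choose (Gm.sig_ex g r K v hv.1 hv.2)
  else choose (Gm.succ_nonempty v)

theorem sig_edge (v : V) : Gm.E v (Gm.sig g r K v) := by
  rw [sig]
  split
  case isTrue hv => exact (choose_spec (Gm.sig_ex g r K v hv.1 hv.2)).1
  case isFalse hv => exact choose_spec (Gm.succ_nonempty v)

theorem sig_mem (v : V) (hv : v ∈ Gm.chainAux g r K ∅) (h0 : v ∈ Gm.V0) :
    Gm.sig g r K v ∈ Gm.PTgt g r K v := by
  rw [sig, dif_pos ⟨hv, h0⟩]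
  exact (choose_spec (Gm.sig_ex g r K v hv h0)).2

/-- All Player-1 successors of a `Z`-vertex land in the uniform target. -/
theorem stepV1 (v : V) (hv : v ∈ Gm.chainAux g r K ∅) (h1 : v ∈ Gm.V1) (w : V)
    (he : Gm.E v w) : w ∈ Gm.PTgt g r K v := by
  rw [PTgt]
  split
  case isTrue hP =>
    rcases hP with hP | hP
    · exact absurd hP.1 (fun h => Gm.not_both v h h1)
    · exact hP.2 w he
  case isFalse hP =>
    rcases Gm.branch_total g r K v hv with h | h | h
    · exact absurd h hP
    · rcases h.2 with hc | hc
      · exact absurd hc.1 (fun h' => Gm.not_both v h' h1)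
      · exact hc.2 w he
    · exact h.2.2 w he

/-- In the live branch there is a live edge into the `X`-target. -/
theorem stepL (v : V) (hv : v ∈ Gm.chainAux g r K ∅) (h1 : v ∈ Gm.V1)
    (hnP : ¬ Gm.branchP g r K v) (hnG : ¬ Gm.branchG g r K v) :
    ∃ w, Gm.El v w ∧ w ∈ Gm.Xt g r K v := by
  rcases Gm.branch_total g r K v hv with h | h | h
  · exact absurd h hnP
  · exact absurd h hnG
  · exact h.1

end LiveGameGraph

section Play

open Set

variable {V : Type*} [Fintype V] (π : ℕ → V)

/-- The set of infinitely visited vertices. -/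
def InfVis : Set V := {v | {i | π i = v}.Infinite}

theorem infvis_nonempty : (InfVis π).Nonempty := by
  rw [Set.nonempty_iff_ne_empty]
  intro h
  have hfin : ∀ v : V, {i | π i = v}.Finite := by
    intro v
    have hv : v ∉ InfVis π := by rw [h]; exact Set.notMem_empty v
    rwa [InfVis, Set.mem_setOf_eq, Set.not_infinite] at hv
  have : (Set.univ : Set ℕ).Finite := by
    have : (Set.univ : Set ℕ) ⊆ ⋃ v : V, {i | π i = v} := by
      intro i _
      exact Set.mem_iUnion.2 ⟨π i, rfl⟩
    exact Set.Finite.subset (Set.finite_iUnion hfin) this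
  exact Set.infinite_univ this

theorem infvis_occurs {v : V} (hv : v ∈ InfVis π) (N : ℕ) : ∃ i, N ≤ i ∧ π i = v := by
  obtain ⟨i, hi, hgt⟩ := Set.Infinite.exists_gt hv N
  exact ⟨i, hgt.le, hi⟩

theorem infvis_tail : ∃ N, ∀ i, N ≤ i → π i ∈ InfVis π := by
  have hS : {i | π i ∉ InfVis π}.Finite := by
    have hsub : {i | π i ∉ InfVis π} ⊆ ⋃ v ∈ (InfVis π)ᶜ, {i | π i = v} := by
      intro i hi
      exact Set.mem_biUnion hi rfl
    refine Set.Finite.subset (Set.Finite.biUnion (Set.toFinite _) ?_) hsub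
    intro v hv
    rw [Set.mem_compl_iff, InfVis, Set.mem_setOf_eq, Set.not_infinite] at hv
    exact hv
  obtain ⟨N, hN⟩ := hS.bddAbove
  refine ⟨N + 1, fun i hi => ?_⟩
  by_contra hc
  have := hN hc
  omega

theorem step_infvis {v w : V} (h : {i | π i = v ∧ π (i+1) = w}.Infinite) :
    w ∈ InfVis π := by
  have : {j | π j = w} ⊇ (fun i => i + 1) '' {i | π i = v ∧ π (i+1) = w} := by
    rintro j ⟨i, ⟨_, hi2⟩, rfl⟩
    exact hi2
  exact Set.Infinite.mono this (Set.Infinite.image (fun a _ b _ h => by omega) h)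

theorem succ_infvis {v : V} (hv : v ∈ InfVis π) :
    ∃ w, w ∈ InfVis π ∧ {i | π i = v ∧ π (i+1) = w}.Infinite := by
  by_contra h
  push_neg at h
  have hfin : ∀ w : V, {i | π i = v ∧ π (i+1) = w}.Finite := by
    intro w
    rcases Set.finite_or_infinite {i | π i = v ∧ π (i+1) = w} with hf | hf
    · exact hf
    · exact h w (step_infvis π hf)
  have : {i | π i = v}.Finite := by
    have hsub : {i | π i = v} ⊆ ⋃ w : V, {i | π i = v ∧ π (i+1) = w} := by
      intro i hi
      exact Set.mem_iUnion.2 ⟨π (i+1), hi, rfl⟩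
    exact Set.Finite.subset (Set.finite_iUnion hfin) hsub
  exact hv this

/-- Trap lemma: a step-closed set met by the tail contains all of `InfVis`. -/
theorem infvis_trap (C : Set V) (N0 : ℕ)
    (hclosed : ∀ i, N0 ≤ i → π i ∈ C → π (i+1) ∈ C)
    (hmeets : ∃ i0, N0 ≤ i0 ∧ π i0 ∈ C) :
    InfVis π ⊆ C := by
  obtain ⟨i0, hi0, hC0⟩ := hmeets
  have hall : ∀ i, i0 ≤ i → π i ∈ C := by
    intro i hi
    induction i with
    | zero => have : i0 = 0 := by omega
              rw [← this]; exact hC0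
    | succ m ih =>
      rcases Nat.lt_or_ge i0 (m+1) with hc | hc
      · exact hclosed m (by omega) (ih (by omega))
      · have : i0 = m+1 := by omega
        rw [← this]; exact hC0
  intro v hv
  obtain ⟨i, hi, hiv⟩ := infvis_occurs π hv i0
  rw [← hiv]
  exact hall i hi

end Play

namespace LiveGameGraph

open Set Classical

variable {V : Type*} [Fintype V] (Gm : LiveGameGraph V) (g r : ℕ → Set V) (K : ℕ)

/-- The primal descent along the levels, for a fixed fair play following `sig`. -/
theorem DESC (π : ℕ → V)
    (hZ : ∀ i, π i ∈ Gm.chainAux g r K ∅)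
    (hstep : ∀ i, π (i+1) ∈ Gm.PTgt g r K (π i))
    (hfair : Gm.StronglyFair π) :
    ∀ j, j ≤ K → (∀ w ∈ InfVis π, Gm.actm g r K w < j) →
      ∃ j', 1 ≤ j' ∧ j' ≤ j ∧ (∃ u ∈ InfVis π, u ∈ g j') ∧
        ∀ w ∈ InfVis π, Gm.actm g r K w < j' := by
  have hIZ : ∀ w ∈ InfVis π, w ∈ Gm.chainAux g r K ∅ := by
    intro w hw
    obtain ⟨i, _, hi⟩ := infvis_occurs π hw 0
    rw [← hi]; exact hZ i
  intro j
  induction j with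
  | zero =>
    intro _ hact
    obtain ⟨u, hu⟩ := infvis_nonempty π
    exact absurd (hact u hu) (by omega)
  | succ j ih =>
    intro hjK hact
    by_cases hG : ∃ u ∈ InfVis π, Gm.actm g r K u = j ∧ u ∈ g (j+1)
    · obtain ⟨u, huI, _hau, hug⟩ := hG
      exact ⟨j+1, by omega, le_rfl, ⟨u, huI, hug⟩, hact⟩
    · push_neg at hG
      set S : Set ℕ := Gm.cP g r K j '' InfVis π with hS
      have hSne : S.Nonempty := (infvis_nonempty π).image _
      have hBmem := Nat.sInf_mem hSne
      set B := sInf S with hB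
      obtain ⟨u0, hu0I, hu0c⟩ := hBmem
      have hlower : ∀ w ∈ InfVis π, B ≤ Gm.cP g r K j w := by
        intro w hw
        exact Nat.sInf_le ⟨w, hw, rfl⟩
      have hc1 : ∀ w ∈ InfVis π, Gm.cP g r K j w = B → Gm.actm g r K w < j := by
        intro w hwI hwc
        by_contra hcon
        have haw : Gm.actm g r K w = j := by
          have := hact w hwI
          omega
        have hwZ : w ∈ Gm.chainAux g r K ∅ := hIZ w hwI
        by_cases hP : Gm.branchP g r K w
        · obtain ⟨w', hw'I, hfib⟩ := succ_infvis π hwI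
          obtain ⟨i, hiv, hiw⟩ := hfib.nonempty
          have hmem : w' ∈ Gm.PTgt g r K w := by
            rw [← hiv, ← hiw]
            exact hstep i
          rw [PTgt, if_pos hP] at hmem
          have := Gm.Xt_code g r K w hwZ w' hmem
          rw [haw, hwc] at this
          exact absurd (hlower w' hw'I) (by omega)
        · rcases Gm.branch_total g r K w hwZ with h | h | h
          · exact absurd h hP
          · rw [branchG, haw] at h
            exact hG w hwI haw h.1
          · obtain ⟨w0, hel, hw0⟩ := h.1
            have hw0I : w0 ∈ InfVis π := step_infvis π (hfair w w0 hel hwI)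
            have := Gm.Xt_code g r K w hwZ w0 hw0
            rw [haw, hwc] at this
            exact absurd (hlower w0 hw0I) (by omega)
      -- trap on the minimal-code set
      obtain ⟨Nt, hNt⟩ := infvis_tail π
      have htrap : InfVis π ⊆ {v | v ∈ InfVis π ∧ Gm.cP g r K j v = B} := by
        apply infvis_trap π _ Nt
        · intro i hi hC
          have hI' : π (i+1) ∈ InfVis π := hNt (i+1) (by omega)
          refine ⟨hI', le_antisymm ?_ (hlower _ hI')⟩
          have h1 : Gm.cP g r K j (π (i+1)) ≤ Gm.cP g r K j (π i) :=
            Gm.PTgt_code g r K (π i) (hZ i) (hc1 (π i) hC.1 hC.2) (by omega)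
              (π (i+1)) (hstep i)
          rw [hC.2] at h1
          exact h1
        · obtain ⟨i0, hi0, hocc⟩ := infvis_occurs π hu0I Nt
          refine ⟨i0, hi0, ?_⟩
          rw [hocc]
          exact ⟨hu0I, hu0c⟩
      have hact' : ∀ w ∈ InfVis π, Gm.actm g r K w < j := by
        intro w hw
        exact hc1 w hw (htrap hw).2
      obtain ⟨j', h1, h2, h3, h4⟩ := ih (by omega) hact'
      exact ⟨j', h1, by omega, h3, h4⟩

/-- Soundness: any fair play compliant with `sig` from `Z` satisfies some pair. -/
theorem soundness (hgK : g K = ∅)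
    (v0 : V) (hv0 : v0 ∈ Gm.chainAux g r K ∅)
    (ρ1 : List V → V → V) (hρ1 : Gm.Strategy1 ρ1)
    (π : ℕ → V) (hcomp : Gm.Compliant (fun _ v => Gm.sig g r K v) ρ1 v0 π)
    (hfair : Gm.StronglyFair π) :
    ∃ j', 1 ≤ j' ∧ j' < K ∧ (∀ N, ∃ i, N ≤ i ∧ π i ∈ g j') ∧
      ∃ N, ∀ i, N ≤ i → ∃ m, 1 ≤ m ∧ m ≤ j' ∧ π i ∉ r m := by
  obtain ⟨hπ0, hπs⟩ := hcomp
  -- the play stays in Z and always moves into the uniform target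
  have hZ : ∀ i, π i ∈ Gm.chainAux g r K ∅ := by
    have hZstep : ∀ i, π i ∈ Gm.chainAux g r K ∅ → π (i+1) ∈ Gm.PTgt g r K (π i) := by
      intro i hi
      rcases Gm.V0_or_V1 (π i) with h0 | h1
      · rw [(hπs i).1 h0]
        exact Gm.sig_mem g r K (π i) hi h0
      · have he : Gm.E (π i) (π (i+1)) := by
          rw [(hπs i).2 h1]
          exact hρ1 _ _ h1
        exact Gm.stepV1 g r K (π i) hi h1 _ he
    intro i
    induction i with
    | zero => rw [hπ0]; exact hv0
    | succ m ihm => exact Gm.PTgt_le_Z g r K (π m) ihm (hZstep m ihm)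
  have hstep : ∀ i, π (i+1) ∈ Gm.PTgt g r K (π i) := by
    intro i
    rcases Gm.V0_or_V1 (π i) with h0 | h1
    · rw [(hπs i).1 h0]
      exact Gm.sig_mem g r K (π i) (hZ i) h0
    · have he : Gm.E (π i) (π (i+1)) := by
        rw [(hπs i).2 h1]
        exact hρ1 _ _ h1
      exact Gm.stepV1 g r K (π i) (hZ i) h1 _ he
  have hIZ : ∀ w ∈ InfVis π, w ∈ Gm.chainAux g r K ∅ := by
    intro w hw
    obtain ⟨i, _, hi⟩ := infvis_occurs π hw 0
    rw [← hi]; exact hZ i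
  obtain ⟨j', h1, h2, ⟨u, huI, hug⟩, h4⟩ :=
    Gm.DESC g r K π hZ hstep hfair K le_rfl
      (fun w hw => Gm.actm_lt g r K w (hIZ w hw))
  have hj'K : j' < K := by
    rcases Nat.lt_or_ge j' K with h | h
    · exact h
    · have : j' = K := by omega
      rw [this, hgK] at hug
      exact absurd hug (Set.notMem_empty u)
  refine ⟨j', h1, hj'K, ?_, ?_⟩
  · intro N
    obtain ⟨i, hi, hocc⟩ := infvis_occurs π huI N
    exact ⟨i, hi, by rw [hocc]; exact hug⟩
  · obtain ⟨Nt, hNt⟩ := infvis_tail π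
    refine ⟨Nt, fun i hi => ?_⟩
    have hiI := hNt i hi
    refine ⟨Gm.actm g r K (π i) + 1, by omega, by have := h4 _ hiI; omega, ?_⟩
    exact Gm.Ravoid g r K (π i) (hZ i)

end LiveGameGraph

namespace LiveGameGraph

open Set Classical

variable {V : Type*} [Fintype V] (Gm : LiveGameGraph V) (g r : ℕ → Set V) (K : ℕ)

/-- The dual thread accumulator of a vertex outside `Z`, from level `K` down. -/
noncomputable def accD (ℓ : ℕ) (v : V) : Set V :=
  if _h : K ≤ ℓ then ∅
  else
    accD (ℓ+1) v ∪
      Gm.Cterm g r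
        (Gm.dstg g r ℓ (accD (ℓ+1) v)
          (sInf {n | v ∉ Gm.dstg g r ℓ (accD (ℓ+1) v) n} - 1))
        (lfpSet fun X => Gm.chainAux g r ℓ
          (accD (ℓ+1) v ∪ Gm.Cterm g r
            (Gm.dstg g r ℓ (accD (ℓ+1) v)
              (sInf {n | v ∉ Gm.dstg g r ℓ (accD (ℓ+1) v) n} - 1)) X (ℓ+1))) (ℓ+1)
  termination_by K - ℓ
  decreasing_by omega

/-- The dual stage (ν-escape rank) of `v` at level `ℓ+1`. -/
noncomputable def sdg (ℓ : ℕ) (v : V) : ℕ :=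
  sInf {n | v ∉ Gm.dstg g r ℓ (Gm.accD g r K (ℓ+1) v) n}

/-- The `Y`-escape target set at level `ℓ+1`. -/
noncomputable def Yde (ℓ : ℕ) (v : V) : Set V :=
  Gm.dstg g r ℓ (Gm.accD g r K (ℓ+1) v) (Gm.sdg g r K ℓ v - 1)

theorem accD_ge {ℓ : ℕ} (h : K ≤ ℓ) (v : V) : Gm.accD g r K ℓ v = ∅ := by
  rw [accD, dif_pos h]

theorem accD_lt {ℓ : ℕ} (h : ℓ < K) (v : V) :
    Gm.accD g r K ℓ v =
      Gm.accD g r K (ℓ+1) v ∪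
        Gm.Cterm g r (Gm.Yde g r K ℓ v)
          (lfpSet fun X => Gm.chainAux g r ℓ
            (Gm.accD g r K (ℓ+1) v ∪ Gm.Cterm g r (Gm.Yde g r K ℓ v) X (ℓ+1))) (ℓ+1) := by
  conv_lhs => rw [accD]
  rw [dif_neg (by omega)]
  rfl

/-- The stored inner fixpoint equals the thread value. -/
theorem DXE {ℓ : ℕ} (h : ℓ < K) (v : V) :
    Gm.chainAux g r ℓ (Gm.accD g r K ℓ v) =
      lfpSet (fun X => Gm.chainAux g r ℓ
        (Gm.accD g r K (ℓ+1) v ∪ Gm.Cterm g r (Gm.Yde g r K ℓ v) X (ℓ+1))) := by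
  conv_lhs => rw [Gm.accD_lt g r K h v]
  exact lfpSet_fixed (Gm.chainAux_innerX_mono g r ℓ (ℓ+1) _ _)

theorem sdg_le (ℓ : ℕ) (v : V) : Gm.sdg g r K ℓ v ≤ Fintype.card V := by
  rcases Set.eq_empty_or_nonempty {n | v ∉ Gm.dstg g r ℓ (Gm.accD g r K (ℓ+1) v) n} with h | h
  · rw [sdg, h]; simp [Nat.sInf_empty]
  · obtain ⟨n, hn⟩ := h
    apply Nat.sInf_le
    show v ∉ Gm.dstg g r ℓ (Gm.accD g r K (ℓ+1) v) (Fintype.card V)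
    rcases le_or_gt n (Fintype.card V) with hc | hc
    · intro hmem
      exact hn (Gm.dstg_anti_n g r ℓ _ hc hmem)
    · intro hmem
      apply hn
      have h1 : Gm.chainAux g r (ℓ+1) (Gm.accD g r K (ℓ+1) v) ⊆
          Gm.dstg g r ℓ (Gm.accD g r K (ℓ+1) v) n := Gm.A_le_dstg g r ℓ _ n
      rw [Gm.A_eq_dstg g r ℓ] at h1
      exact h1 hmem

/-- Unfolding of the dual thread value. -/
theorem DAU {ℓ : ℕ} (h : ℓ < K) (v : V) :
    Gm.chainAux g r ℓ (Gm.accD g r K ℓ v) =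
      Gm.dstg g r ℓ (Gm.accD g r K (ℓ+1) v) ((Gm.sdg g r K ℓ v - 1) + 1) := by
  rw [Gm.dstg_succ, Gm.DXE g r K h v]
  rfl

theorem DINV_step {ℓ : ℕ} (h : ℓ < K) (v : V)
    (hv : v ∉ Gm.chainAux g r (ℓ+1) (Gm.accD g r K (ℓ+1) v)) :
    v ∉ Gm.chainAux g r ℓ (Gm.accD g r K ℓ v) ∧ 1 ≤ Gm.sdg g r K ℓ v := by
  have hne : v ∉ Gm.dstg g r ℓ (Gm.accD g r K (ℓ+1) v) (Fintype.card V) := by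
    rw [← Gm.A_eq_dstg g r ℓ]; exact hv
  have hmem : Gm.sdg g r K ℓ v ∈ {n | v ∉ Gm.dstg g r ℓ (Gm.accD g r K (ℓ+1) v) n} := by
    rw [sdg]
    exact Nat.sInf_mem ⟨Fintype.card V, hne⟩
  have hmem' : v ∉ Gm.dstg g r ℓ (Gm.accD g r K (ℓ+1) v) (Gm.sdg g r K ℓ v) := hmem
  have hpos : 1 ≤ Gm.sdg g r K ℓ v := by
    by_contra hc
    have h0 : Gm.sdg g r K ℓ v = 0 := by omega
    rw [h0, Gm.dstg_zero] at hmem'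
    exact hmem' (Set.mem_univ v)
  constructor
  · rw [Gm.DAU g r K h v]
    have : Gm.sdg g r K ℓ v - 1 + 1 = Gm.sdg g r K ℓ v := by omega
    rw [this]; exact hmem'
  · exact hpos

theorem DINV (v : V) (hv : v ∉ Gm.chainAux g r K ∅) :
    ∀ ℓ, ℓ ≤ K → v ∉ Gm.chainAux g r ℓ (Gm.accD g r K ℓ v) := by
  apply down_induct
  · rw [Gm.accD_ge g r K le_rfl]; exact hv
  · intro ℓ h ih
    exact (Gm.DINV_step g r K h v ih).1

theorem sdg_pos (v : V) (hv : v ∉ Gm.chainAux g r K ∅) {ℓ : ℕ} (h : ℓ < K) :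
    1 ≤ Gm.sdg g r K ℓ v :=
  (Gm.DINV_step g r K h v (Gm.DINV g r K v hv (ℓ+1) h)).2

/-- `Z` is contained in every dual thread value. -/
theorem DCU (v : V) : ∀ ℓ, ℓ ≤ K →
    Gm.chainAux g r K ∅ ⊆ Gm.chainAux g r ℓ (Gm.accD g r K ℓ v) := by
  apply down_induct
  · rw [Gm.accD_ge g r K le_rfl]
  · intro ℓ h ih
    refine ih.trans ?_
    rw [Gm.DXE g r K h v, Gm.chainAux_KU g r ℓ (Gm.accD g r K (ℓ+1) v)]
    apply lfpSet_mono
    intro X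
    apply Gm.chainAux_mono
    apply Set.union_subset_union subset_rfl
    apply Gm.Cterm_mono
    · exact Gm.A_le_dstg g r ℓ _ _
    · exact subset_rfl

theorem Z_le_Yde (v : V) {ℓ : ℕ} (h : ℓ < K) :
    Gm.chainAux g r K ∅ ⊆ Gm.Yde g r K ℓ v :=
  (Gm.DCU g r K v (ℓ+1) h).trans (Gm.A_le_dstg g r ℓ _ _)

/-- Dual code. -/
noncomputable def cD (ℓ : ℕ) (v : V) : ℕ :=
  if _h : K ≤ ℓ then 0
  else cD (ℓ+1) v * (Fintype.card V + 1) + Gm.sdg g r K ℓ v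
  termination_by K - ℓ
  decreasing_by omega

theorem cD_ge {ℓ : ℕ} (h : K ≤ ℓ) (v : V) : Gm.cD g r K ℓ v = 0 := by
  rw [cD, dif_pos h]

theorem cD_lt {ℓ : ℕ} (h : ℓ < K) (v : V) :
    Gm.cD g r K ℓ v = Gm.cD g r K (ℓ+1) v * (Fintype.card V + 1) + Gm.sdg g r K ℓ v := by
  conv_lhs => rw [cD]
  rw [dif_neg (by omega)]

theorem DPROJ_step {ℓ : ℕ} (h : ℓ < K) (v w : V)
    (hle : Gm.cD g r K ℓ w ≤ Gm.cD g r K ℓ v) :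
    Gm.cD g r K (ℓ+1) w ≤ Gm.cD g r K (ℓ+1) v := by
  rw [Gm.cD_lt g r K h v, Gm.cD_lt g r K h w] at hle
  by_contra hc
  push_neg at hc
  have h2 : (Gm.cD g r K (ℓ+1) v + 1) * (Fintype.card V + 1) ≤
      Gm.cD g r K (ℓ+1) w * (Fintype.card V + 1) :=
    Nat.mul_le_mul_right _ hc
  have h3 := Gm.sdg_le g r K ℓ v
  have h4 := Gm.sdg_le g r K ℓ w
  nlinarith

theorem DPROJ (v w : V) : ∀ ℓ ℓ', ℓ ≤ ℓ' →
    Gm.cD g r K ℓ w ≤ Gm.cD g r K ℓ v → Gm.cD g r K ℓ' w ≤ Gm.cD g r K ℓ' v := by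
  intro ℓ ℓ' hll
  induction ℓ' with
  | zero => have : ℓ = 0 := by omega
            rw [this]; exact id
  | succ m ih =>
    intro hle
    rcases Nat.lt_or_ge ℓ (m+1) with h | h
    · rcases Nat.lt_or_ge m K with hmK | hmK
      · exact Gm.DPROJ_step g r K hmK v w (ih (by omega) hle)
      · rw [Gm.cD_ge g r K (by omega) v, Gm.cD_ge g r K (by omega) w]
    · have : ℓ = m + 1 := by omega
      rw [← this]; exact hle

/-- The dual comparison lemma. -/
theorem DCMP (v : V) (hv : v ∉ Gm.chainAux g r K ∅) :
    ∀ d ℓ, ℓ + d = K → ∀ w, w ∉ Gm.chainAux g r ℓ (Gm.accD g r K ℓ v) →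
      Gm.cD g r K ℓ w ≤ Gm.cD g r K ℓ v ∧
        (Gm.cD g r K ℓ w = Gm.cD g r K ℓ v → Gm.accD g r K ℓ w = Gm.accD g r K ℓ v) := by
  intro d
  induction d with
  | zero =>
    intro ℓ hd w _hw
    have hK : K ≤ ℓ := by omega
    rw [Gm.cD_ge g r K hK, Gm.cD_ge g r K hK,
      Gm.accD_ge g r K hK, Gm.accD_ge g r K hK]
    simp
  | succ d ih =>
    intro ℓ hd w hw
    have hlt : ℓ < K := by omega
    have hsd1 : 1 ≤ Gm.sdg g r K ℓ v := Gm.sdg_pos g r K v hv hlt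
    have hw1 : w ∉ Gm.dstg g r ℓ (Gm.accD g r K (ℓ+1) v) (Gm.sdg g r K ℓ v) := by
      rw [Gm.DAU g r K hlt v] at hw
      have : Gm.sdg g r K ℓ v - 1 + 1 = Gm.sdg g r K ℓ v := by omega
      rwa [this] at hw
    have hw2 : w ∉ Gm.chainAux g r (ℓ+1) (Gm.accD g r K (ℓ+1) v) := by
      intro hc
      exact hw1 (Gm.A_le_dstg g r ℓ _ _ hc)
    obtain ⟨ih1, ih2⟩ := ih (ℓ+1) (by omega) w hw2
    rcases lt_or_eq_of_le ih1 with hlt2 | heq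
    · have harith : Gm.cD g r K ℓ w < Gm.cD g r K ℓ v := by
        rw [Gm.cD_lt g r K hlt v, Gm.cD_lt g r K hlt w]
        have h2 : (Gm.cD g r K (ℓ+1) w + 1) * (Fintype.card V + 1) ≤
            Gm.cD g r K (ℓ+1) v * (Fintype.card V + 1) := Nat.mul_le_mul_right _ hlt2
        have h3 := Gm.sdg_le g r K ℓ w
        nlinarith
      exact ⟨harith.le, fun hc => absurd hc (by omega)⟩
    · have hacc : Gm.accD g r K (ℓ+1) w = Gm.accD g r K (ℓ+1) v := ih2 heq
      have hple : Gm.sdg g r K ℓ w ≤ Gm.sdg g r K ℓ v := by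
        apply Nat.sInf_le
        show w ∉ Gm.dstg g r ℓ (Gm.accD g r K (ℓ+1) w) (Gm.sdg g r K ℓ v)
        rw [hacc]
        exact hw1
      constructor
      · rw [Gm.cD_lt g r K hlt v, Gm.cD_lt g r K hlt w, heq]
        omega
      · intro hceq
        have hpeq : Gm.sdg g r K ℓ w = Gm.sdg g r K ℓ v := by
          rw [Gm.cD_lt g r K hlt v, Gm.cD_lt g r K hlt w, heq] at hceq
          omega
        have hyde : Gm.Yde g r K ℓ w = Gm.Yde g r K ℓ v := by
          rw [Yde, Yde, hacc, hpeq]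
        rw [Gm.accD_lt g r K hlt v, Gm.accD_lt g r K hlt w, hacc, hyde]

/-- Dual control: non-membership in the thread value bounds the dual code. -/
theorem DCTL (v : V) (hv : v ∉ Gm.chainAux g r K ∅) {ℓ : ℕ} (hle : ℓ ≤ K) (w : V)
    (hw : w ∉ Gm.chainAux g r ℓ (Gm.accD g r K ℓ v)) :
    Gm.cD g r K ℓ w ≤ Gm.cD g r K ℓ v :=
  (Gm.DCMP g r K v hv (K - ℓ) ℓ (by omega) w hw).1

/-- Dual strict decrease for an escape move. -/
theorem DESCAPE (v : V) (hv : v ∉ Gm.chainAux g r K ∅) {ℓ : ℕ} (hlt : ℓ < K) (w : V)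
    (hw : w ∉ Gm.Yde g r K ℓ v) :
    Gm.cD g r K ℓ w < Gm.cD g r K ℓ v := by
  have hw2 : w ∉ Gm.chainAux g r (ℓ+1) (Gm.accD g r K (ℓ+1) v) := by
    intro hc
    exact hw (Gm.A_le_dstg g r ℓ _ _ hc)
  obtain ⟨ih1, ih2⟩ := Gm.DCMP g r K v hv (K - (ℓ+1)) (ℓ+1) (by omega) w hw2
  have hsd1 : 1 ≤ Gm.sdg g r K ℓ v := Gm.sdg_pos g r K v hv hlt
  rcases lt_or_eq_of_le ih1 with hlt2 | heq
  · rw [Gm.cD_lt g r K hlt v, Gm.cD_lt g r K hlt w]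
    have h2 : (Gm.cD g r K (ℓ+1) w + 1) * (Fintype.card V + 1) ≤
        Gm.cD g r K (ℓ+1) v * (Fintype.card V + 1) := Nat.mul_le_mul_right _ hlt2
    have h3 := Gm.sdg_le g r K ℓ w
    nlinarith
  · have hacc : Gm.accD g r K (ℓ+1) w = Gm.accD g r K (ℓ+1) v := ih2 heq
    have hple : Gm.sdg g r K ℓ w ≤ Gm.sdg g r K ℓ v - 1 := by
      apply Nat.sInf_le
      show w ∉ Gm.dstg g r ℓ (Gm.accD g r K (ℓ+1) w) (Gm.sdg g r K ℓ v - 1)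
      rw [hacc]
      exact hw
    rw [Gm.cD_lt g r K hlt v, Gm.cD_lt g r K hlt w, heq]
    omega

end LiveGameGraph

namespace LiveGameGraph

open Set Classical

variable {V : Type*} [Fintype V] (Gm : LiveGameGraph V) (g r : ℕ → Set V) (K : ℕ)

/-- The dual stable set at level `ℓ+1` (complement view). -/
noncomputable def XSs (ℓ : ℕ) (v : V) : Set V := Gm.chainAux g r ℓ (Gm.accD g r K ℓ v)

theorem accD_le_zero (v : V) : ∀ ℓ, ℓ ≤ K → Gm.accD g r K ℓ v ⊆ Gm.accD g r K 0 v := by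
  intro ℓ
  induction ℓ with
  | zero => intro _; exact subset_rfl
  | succ m ih =>
    intro h
    have hmK : m < K := by omega
    have h2 : Gm.accD g r K (m+1) v ⊆ Gm.accD g r K m v := by
      conv_rhs => rw [Gm.accD_lt g r K hmK v]
      exact Set.subset_union_left
    exact h2.trans (ih (by omega))

/-- The vertex fails its own `C̃`-term at every level of its dual thread. -/
theorem DBOT (v : V) (hv : v ∉ Gm.chainAux g r K ∅) {ℓ : ℕ} (hℓ : ℓ < K) :
    v ∉ Gm.Cterm g r (Gm.Yde g r K ℓ v) (Gm.XSs g r K ℓ v) (ℓ+1) := by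
  intro hmem
  have hpc : v ∈ Gm.accD g r K ℓ v := by
    rw [Gm.accD_lt g r K hℓ v]
    right
    rwa [XSs, Gm.DXE g r K hℓ v] at hmem
  have h0 : v ∈ Gm.accD g r K 0 v :=
    Gm.accD_le_zero g r K v ℓ (by omega) hpc
  have := Gm.DINV g r K v hv 0 (Nat.zero_le K)
  rw [Gm.chainAux_zero] at this
  exact this h0

/-- Decomposition of the failed `C̃`-term at a relevant level. -/
theorem DGAP (v : V) (hv : v ∉ Gm.chainAux g r K ∅) {ℓ : ℕ} (hℓ : ℓ < K)
    (hrel : v ∉ r (ℓ+1)) :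
    (v ∈ g (ℓ+1) → v ∉ Gm.cpre (Gm.Yde g r K ℓ v)) ∧
      v ∉ Gm.cpre (Gm.XSs g r K ℓ v) ∧
      (v ∈ Gm.lpre (Gm.XSs g r K ℓ v) → v ∉ Gm.pre1 (Gm.Yde g r K ℓ v)) := by
  have h := Gm.DBOT g r K v hv hℓ
  rw [Cterm] at h
  have h2 : v ∉ (g (ℓ+1) ∩ Gm.cpre (Gm.Yde g r K ℓ v)) ∪
      Gm.apre (Gm.Yde g r K ℓ v) (Gm.XSs g r K ℓ v) := by
    intro hc
    exact h ⟨hrel, hc⟩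
  rw [apre] at h2
  refine ⟨?_, ?_, ?_⟩
  · intro hg hc
    exact h2 (Set.mem_union_left _ ⟨hg, hc⟩)
  · intro hc
    exact h2 (Set.mem_union_right _ (Set.mem_union_left _ hc))
  · intro hl hc
    exact h2 (Set.mem_union_right _ (Set.mem_union_right _ ⟨hl, hc⟩))

/-- Live vertices. -/
def Vl : Set V := {v | ∃ w, Gm.El v w}

theorem V0_not_lpre (v : V) (h0 : v ∈ Gm.V0) (S : Set V) : v ∉ Gm.lpre S := by
  rintro ⟨w, hel, _⟩
  exact Gm.not_both v h0 (Gm.live_sub v w hel).1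

/-- Need of Player 1 at level `ℓ+1`. -/
def needD (ℓ : ℕ) (v : V) : Prop :=
  v ∉ r (ℓ+1) ∧ (v ∈ g (ℓ+1) ∨ v ∈ Gm.lpre (Gm.XSs g r K ℓ v))

def hasNeed (v : V) : Prop := ∃ ℓ, ℓ < K ∧ Gm.needD g r K ℓ v

/-- The top need level. -/
noncomputable def TD (v : V) : ℕ := sSup {ℓ | ℓ < K ∧ Gm.needD g r K ℓ v}

theorem TD_spec (v : V) (h : Gm.hasNeed g r K v) :
    Gm.TD g r K v < K ∧ Gm.needD g r K (Gm.TD g r K v) v := by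
  have hmem : Gm.TD g r K v ∈ {ℓ | ℓ < K ∧ Gm.needD g r K ℓ v} := by
    rw [TD]
    apply Nat.sSup_mem h
    exact ⟨K, fun x hx => hx.1.le⟩
  exact hmem

theorem TD_ge (v : V) {ℓ : ℕ} (hℓ : ℓ < K) (h : Gm.needD g r K ℓ v) :
    ℓ ≤ Gm.TD g r K v :=
  le_csSup ⟨K, fun x hx => hx.1.le⟩ ⟨hℓ, h⟩

end LiveGameGraph

/-- The minimal relevant level. -/
noncomputable def mhD {V : Type*} (r : ℕ → Set V) (K : ℕ) (v : V) : ℕ :=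
  sInf {ℓ | ℓ < K ∧ v ∉ r (ℓ+1)}

theorem mhD_spec {V : Type*} (r : ℕ → Set V) (K : ℕ) (hK1 : 1 ≤ K) (hrK : r K = ∅) (v : V) :
    mhD r K v < K ∧ v ∉ r (mhD r K v + 1) := by
  have hmem : mhD r K v ∈ {ℓ | ℓ < K ∧ v ∉ r (ℓ+1)} := by
    rw [mhD]
    apply Nat.sInf_mem
    refine ⟨K-1, by omega, ?_⟩
    have : K - 1 + 1 = K := by omega
    rw [this, hrK]
    exact Set.notMem_empty v
  exact hmem

namespace LiveGameGraph

open Set Classical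

variable {V : Type*} [Fintype V] (Gm : LiveGameGraph V) (g r : ℕ → Set V) (K : ℕ)

/-- The control level above the top need. -/
noncomputable def csl (v : V) : ℕ :=
  sInf {ℓ | Gm.TD g r K v < ℓ ∧ ℓ < K ∧ v ∉ r (ℓ+1)}

theorem csl_spec (hrK : r K = ∅) (v : V) (hTD : Gm.TD g r K v + 1 < K) :
    Gm.TD g r K v < Gm.csl g r K v ∧ Gm.csl g r K v < K ∧ v ∉ r (Gm.csl g r K v + 1) := by
  have hmem : Gm.csl g r K v ∈ {ℓ | Gm.TD g r K v < ℓ ∧ ℓ < K ∧ v ∉ r (ℓ+1)} := by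
    rw [csl]
    apply Nat.sInf_mem
    refine ⟨K-1, by omega, by omega, ?_⟩
    have : K - 1 + 1 = K := by omega
    rw [this, hrK]
    exact Set.notMem_empty v
  exact hmem

theorem not_need_above_TD (v : V) {ℓ : ℕ} (hℓ : ℓ < K) (hgt : Gm.TD g r K v < ℓ) :
    ¬ Gm.needD g r K ℓ v := by
  intro h
  exact absurd (Gm.TD_ge g r K v hℓ h) (by omega)

theorem safe_live (v : V) {ℓ : ℕ} (hrel : v ∉ r (ℓ+1))
    (hnn : ¬ Gm.needD g r K ℓ v) (w : V) (hel : Gm.El v w) :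
    w ∉ Gm.XSs g r K ℓ v := by
  intro hc
  exact hnn ⟨hrel, Or.inr ⟨w, hel, hc⟩⟩

theorem esc_ex (v : V) (hv : v ∉ Gm.chainAux g r K ∅) (h1 : v ∈ Gm.V1) {ℓ : ℕ}
    (hℓ : ℓ < K) (hneed : Gm.needD g r K ℓ v) :
    ∃ w, Gm.E v w ∧ w ∉ Gm.Yde g r K ℓ v := by
  obtain ⟨hgap1, _hgap2, hgap3⟩ := Gm.DGAP g r K v hv hℓ hneed.1
  have hnp1 : v ∉ Gm.pre1 (Gm.Yde g r K ℓ v) := by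
    rcases hneed.2 with hg | hl
    · intro hc
      exact hgap1 hg (Or.inr hc)
    · exact hgap3 hl
  by_contra hc
  push_neg at hc
  exact hnp1 ⟨h1, fun w hw => hc w hw⟩

theorem plain_ex (v : V) (hv : v ∉ Gm.chainAux g r K ∅) (h1 : v ∈ Gm.V1) {ℓ : ℕ}
    (hℓ : ℓ < K) (hrel : v ∉ r (ℓ+1)) :
    ∃ w, Gm.E v w ∧ w ∉ Gm.XSs g r K ℓ v := by
  obtain ⟨_, hgap2, _⟩ := Gm.DGAP g r K v hv hℓ hrel
  have hnp1 : v ∉ Gm.pre1 (Gm.XSs g r K ℓ v) := fun hc => hgap2 (Or.inr hc)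
  by_contra hc
  push_neg at hc
  exact hnp1 ⟨h1, fun w hw => hc w hw⟩

theorem v0_all (v : V) (hv : v ∉ Gm.chainAux g r K ∅) (h0 : v ∈ Gm.V0) {ℓ : ℕ}
    (hℓ : ℓ < K) (hrel : v ∉ r (ℓ+1)) (w : V) (he : Gm.E v w) :
    w ∉ Gm.XSs g r K ℓ v := by
  obtain ⟨_, hgap2, _⟩ := Gm.DGAP g r K v hv hℓ hrel
  intro hc
  exact hgap2 (Or.inl ⟨h0, w, he, hc⟩)

theorem v0_g (v : V) (hv : v ∉ Gm.chainAux g r K ∅) (h0 : v ∈ Gm.V0) {ℓ : ℕ}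
    (hℓ : ℓ < K) (hrel : v ∉ r (ℓ+1)) (hg : v ∈ g (ℓ+1)) (w : V) (he : Gm.E v w) :
    w ∉ Gm.Yde g r K ℓ v := by
  obtain ⟨hgap1, _, _⟩ := Gm.DGAP g r K v hv hℓ hrel
  intro hc
  exact hgap1 hg (Or.inl ⟨h0, w, he, hc⟩)

/-- An arbitrary successor. -/
noncomputable def anyS (v : V) : V := choose (Gm.succ_nonempty v)

theorem anyS_edge (v : V) : Gm.E v (Gm.anyS v) := choose_spec (Gm.succ_nonempty v)

/-- The escape target. -/
noncomputable def escT (v : V) : V :=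
  if h : v ∉ Gm.chainAux g r K ∅ ∧ v ∈ Gm.V1 ∧ Gm.hasNeed g r K v then
    choose (Gm.esc_ex g r K v h.1 h.2.1 (Gm.TD_spec g r K v h.2.2).1
      (Gm.TD_spec g r K v h.2.2).2)
  else Gm.anyS v

theorem escT_spec (v : V) (hv : v ∉ Gm.chainAux g r K ∅) (h1 : v ∈ Gm.V1)
    (hn : Gm.hasNeed g r K v) :
    Gm.E v (Gm.escT g r K v) ∧ Gm.escT g r K v ∉ Gm.Yde g r K (Gm.TD g r K v) v := by
  rw [escT, dif_pos ⟨hv, h1, hn⟩]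
  exact choose_spec (Gm.esc_ex g r K v hv h1 (Gm.TD_spec g r K v hn).1
    (Gm.TD_spec g r K v hn).2)

theorem escT_edge (v : V) : Gm.E v (Gm.escT g r K v) := by
  rw [escT]
  split
  case isTrue h =>
    exact (choose_spec (Gm.esc_ex g r K v h.1 h.2.1 (Gm.TD_spec g r K v h.2.2).1
      (Gm.TD_spec g r K v h.2.2).2)).1
  case isFalse h => exact Gm.anyS_edge v

/-- The plain target. -/
noncomputable def plainT (hK1 : 1 ≤ K) (hrK : r K = ∅) (v : V) : V :=
  if h : v ∉ Gm.chainAux g r K ∅ ∧ v ∈ Gm.V1 then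
    choose (Gm.plain_ex g r K v h.1 h.2 (mhD_spec r K hK1 hrK v).1
      (mhD_spec r K hK1 hrK v).2)
  else Gm.anyS v

theorem plainT_spec (hK1 : 1 ≤ K) (hrK : r K = ∅) (v : V)
    (hv : v ∉ Gm.chainAux g r K ∅) (h1 : v ∈ Gm.V1) :
    Gm.E v (Gm.plainT g r K hK1 hrK v) ∧
      Gm.plainT g r K hK1 hrK v ∉ Gm.XSs g r K (mhD r K v) v := by
  rw [plainT, dif_pos ⟨hv, h1⟩]
  exact choose_spec (Gm.plain_ex g r K v hv h1 (mhD_spec r K hK1 hrK v).1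
    (mhD_spec r K hK1 hrK v).2)

theorem plainT_edge (hK1 : 1 ≤ K) (hrK : r K = ∅) (v : V) :
    Gm.E v (Gm.plainT g r K hK1 hrK v) := by
  rw [plainT]
  split
  case isTrue h =>
    exact (choose_spec (Gm.plain_ex g r K v h.1 h.2 (mhD_spec r K hK1 hrK v).1
      (mhD_spec r K hK1 hrK v).2)).1
  case isFalse h => exact Gm.anyS_edge v

/-- List of live successors. -/
noncomputable def liveL (v : V) : List V := (Set.toFinite {w | Gm.El v w}).toFinset.toList

theorem mem_liveL (v w : V) : w ∈ Gm.liveL v ↔ Gm.El v w := by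
  rw [liveL, Finset.mem_toList, Set.Finite.mem_toFinset]
  rfl

/-- Round-robin live target. -/
noncomputable def rrT (v : V) (n : ℕ) : V :=
  if h : Gm.liveL v = [] then Gm.anyS v
  else (Gm.liveL v).get ⟨n % (Gm.liveL v).length, by
    apply Nat.mod_lt
    cases hl : Gm.liveL v with
    | nil => exact absurd hl h
    | cons a l => simp [hl]⟩

theorem rrT_live (v : V) (hvl : v ∈ Gm.Vl) (n : ℕ) : Gm.El v (Gm.rrT v n) := by
  obtain ⟨w, hw⟩ := hvl
  have hne : Gm.liveL v ≠ [] := by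
    intro hc
    have := (Gm.mem_liveL v w).2 hw
    rw [hc] at this
    exact absurd this List.not_mem_nil
  rw [rrT, dif_neg hne]
  exact (Gm.mem_liveL v _).1 (List.get_mem _ _)

theorem rrT_edge (v : V) (hvl : v ∈ Gm.Vl) (n : ℕ) : Gm.E v (Gm.rrT v n) :=
  (Gm.live_sub v _ (Gm.rrT_live v hvl n)).2

theorem rrT_hit (v w : V) (hel : Gm.El v w) :
    ∃ idx, idx < (Gm.liveL v).length ∧
      ∀ n, n % (Gm.liveL v).length = idx → Gm.rrT v n = w := by
  have hmem : w ∈ Gm.liveL v := (Gm.mem_liveL v w).2 hel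
  obtain ⟨idx, hidx⟩ := List.get_of_mem hmem
  refine ⟨idx.1, idx.2, fun n hn => ?_⟩
  have hne : Gm.liveL v ≠ [] := by
    intro hc
    rw [hc] at hmem
    exact absurd hmem List.not_mem_nil
  rw [rrT, dif_neg hne]
  rw [← hidx]
  congr 1
  exact Fin.ext hn

/-- The Player-1 policy, given its visit count at the current vertex. -/
noncomputable def pol (hK1 : 1 ≤ K) (hrK : r K = ∅) (v : V) (n : ℕ) : V :=
  if v ∉ Gm.chainAux g r K ∅ ∧ v ∈ Gm.V1 then
    if Gm.hasNeed g r K v then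
      if Gm.TD g r K v + 1 = K ∨ v ∉ Gm.Vl then Gm.escT g r K v
      else if n % 2 = 0 then Gm.escT g r K v
      else Gm.rrT v (n / 2)
    else if v ∈ Gm.Vl then Gm.rrT v n
    else Gm.plainT g r K hK1 hrK v
  else Gm.anyS v

theorem pol_edge (hK1 : 1 ≤ K) (hrK : r K = ∅) (v : V) (n : ℕ) :
    Gm.E v (Gm.pol g r K hK1 hrK v n) := by
  rw [pol]
  split
  case isTrue h =>
    split
    case isTrue hn =>
      split
      case isTrue h2 => exact Gm.escT_edge g r K v
      case isFalse h2 =>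
        have hvl : v ∈ Gm.Vl := by
          push_neg at h2
          exact h2.2
        split
        case isTrue => exact Gm.escT_edge g r K v
        case isFalse => exact Gm.rrT_edge v hvl _
    case isFalse hn =>
      split
      case isTrue hvl => exact Gm.rrT_edge v hvl _
      case isFalse => exact Gm.plainT_edge g r K hK1 hrK v
  case isFalse => exact Gm.anyS_edge v

end LiveGameGraph

section PlayBuild

open Classical

variable {V : Type*}

/-- The play built from two strategies: history plus current vertex. -/
noncomputable def playQ (Gm : LiveGameGraph V) (ρ0 ρ1 : List V → V → V) (v0 : V) :
    ℕ → List V × V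
  | 0 => ([], v0)
  | i+1 =>
    ((playQ Gm ρ0 ρ1 v0 i).1 ++ [(playQ Gm ρ0 ρ1 v0 i).2],
      if (playQ Gm ρ0 ρ1 v0 i).2 ∈ Gm.V0 then
        ρ0 (playQ Gm ρ0 ρ1 v0 i).1 (playQ Gm ρ0 ρ1 v0 i).2
      else ρ1 (playQ Gm ρ0 ρ1 v0 i).1 (playQ Gm ρ0 ρ1 v0 i).2)

/-- The play. -/
noncomputable def playOf (Gm : LiveGameGraph V) (ρ0 ρ1 : List V → V → V) (v0 : V)
    (i : ℕ) : V := (playQ Gm ρ0 ρ1 v0 i).2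

theorem ofFn_snoc (π : ℕ → V) (i : ℕ) :
    List.ofFn (fun j : Fin (i+1) => π j.1) =
      (List.ofFn fun j : Fin i => π j.1) ++ [π i] := by
  rw [List.ofFn_succ']
  simp

theorem playQ_hist (Gm : LiveGameGraph V) (ρ0 ρ1 : List V → V → V) (v0 : V) (i : ℕ) :
    (playQ Gm ρ0 ρ1 v0 i).1 = List.ofFn (fun j : Fin i => playOf Gm ρ0 ρ1 v0 j.1) := by
  induction i with
  | zero => simp [playQ]
  | succ m ih =>
    rw [ofFn_snoc]
    show (playQ Gm ρ0 ρ1 v0 m).1 ++ [(playQ Gm ρ0 ρ1 v0 m).2] = _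
    rw [ih]
    rfl

theorem playOf_compliant (Gm : LiveGameGraph V) (ρ0 ρ1 : List V → V → V) (v0 : V) :
    Gm.Compliant ρ0 ρ1 v0 (playOf Gm ρ0 ρ1 v0) := by
  refine ⟨rfl, fun i => ⟨?_, ?_⟩⟩
  · intro h0
    have h0' : (playQ Gm ρ0 ρ1 v0 i).2 ∈ Gm.V0 := h0
    show (if (playQ Gm ρ0 ρ1 v0 i).2 ∈ Gm.V0 then _ else _) = _
    rw [if_pos h0', playQ_hist]
    rfl
  · intro h1
    have h0 : (playOf Gm ρ0 ρ1 v0 i) ∉ Gm.V0 := by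
      intro hc
      have : playOf Gm ρ0 ρ1 v0 i ∈ Gm.V0 ∩ Gm.V1 := ⟨hc, h1⟩
      rw [Gm.disj] at this
      exact this
    have h0' : (playQ Gm ρ0 ρ1 v0 i).2 ∉ Gm.V0 := h0
    show (if (playQ Gm ρ0 ρ1 v0 i).2 ∈ Gm.V0 then _ else _) = _
    rw [if_neg h0', playQ_hist]
    rfl

/-- The visit counter: occurrences of `v` strictly before time `i`. -/
noncomputable def cntP (π : ℕ → V) (v : V) (i : ℕ) : ℕ :=
  (List.ofFn (fun j : Fin i => π j.1)).countP (fun x => decide (x = v))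

theorem cntP_zero (π : ℕ → V) (v : V) : cntP π v 0 = 0 := by
  simp [cntP]

theorem cntP_succ (π : ℕ → V) (v : V) (i : ℕ) :
    cntP π v (i+1) = cntP π v i + (if π i = v then 1 else 0) := by
  rw [cntP, ofFn_snoc, List.countP_append]
  congr 1
  show List.countP _ [π i] = _
  rw [List.countP_cons, List.countP_nil]
  by_cases h : π i = v <;> simp [h]

theorem cntP_le (π : ℕ → V) (v : V) (i : ℕ) : cntP π v i ≤ i := by
  calc cntP π v i ≤ (List.ofFn (fun j : Fin i => π j.1)).length := List.countP_le_length
  _ = i := by simp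

theorem cntP_const (π : ℕ → V) (v : V) {j j' : ℕ} (hle : j ≤ j')
    (hno : ∀ t, j ≤ t → t < j' → π t ≠ v) : cntP π v j' = cntP π v j := by
  induction j' with
  | zero => have : j = 0 := by omega
            rw [this]
  | succ m ih =>
    rcases Nat.lt_or_ge j (m+1) with h | h
    · rw [cntP_succ, if_neg (hno m (by omega) (by omega)), ih (by omega)
        (fun t ht ht' => hno t ht (by omega))]
      omega
    · have : j = m+1 := by omega
      rw [this]

theorem cnt_attains [Fintype V] (π : ℕ → V) (v : V) (hv : v ∈ InfVis π) (c : ℕ) :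
    ∃ i, π i = v ∧ cntP π v i = c := by
  induction c with
  | zero =>
    have hne : {i | π i = v}.Nonempty := by
      obtain ⟨i, _, hi⟩ := infvis_occurs π hv 0
      exact ⟨i, hi⟩
    set i0 := sInf {i | π i = v} with hi0
    have hmem : π i0 = v := Nat.sInf_mem hne
    refine ⟨i0, hmem, ?_⟩
    rw [cntP_const π v (Nat.zero_le i0) ?_, cntP_zero]
    intro t _ ht hc
    have := Nat.sInf_le (show t ∈ {i | π i = v} from hc)
    omega
  | succ c ihc =>
    obtain ⟨i, hiv, hic⟩ := ihc
    have hne : {i' | i < i' ∧ π i' = v}.Nonempty := by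
      obtain ⟨i', hi', hv'⟩ := infvis_occurs π hv (i+1)
      exact ⟨i', by omega, hv'⟩
    set i1 := sInf {i' | i < i' ∧ π i' = v} with hi1
    have hmem : i < i1 ∧ π i1 = v := Nat.sInf_mem hne
    refine ⟨i1, hmem.2, ?_⟩
    have h1 : cntP π v (i+1) = c + 1 := by
      rw [cntP_succ, if_pos hiv, hic]
    rw [cntP_const π v (show i+1 ≤ i1 by omega) ?_, h1]
    intro t ht ht' hc
    have hit : i < t := by omega
    have := Nat.sInf_le (show t ∈ {i' | i < i' ∧ π i' = v} from ⟨hit, hc⟩)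
    omega

/-- Visits with arbitrarily prescribed large counters exist and are unbounded. -/
theorem visits_with_counter [Fintype V] (π : ℕ → V) (v : V) (hv : v ∈ InfVis π)
    (C : Set ℕ) (hC : ∀ N, ∃ c, N ≤ c ∧ c ∈ C) :
    ∀ N, ∃ i, N ≤ i ∧ π i = v ∧ cntP π v i ∈ C := by
  intro N
  obtain ⟨c, hcN, hcC⟩ := hC N
  obtain ⟨i, hiv, hic⟩ := cnt_attains π v hv c
  have : c ≤ i := by
    rw [← hic]
    exact cntP_le π v i
  exact ⟨i, by omega, hiv, by rw [hic]; exact hcC⟩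

end PlayBuild

section Helpers

theorem unbounded_infinite {P : ℕ → Prop} (h : ∀ N, ∃ i, N ≤ i ∧ P i) :
    {i | P i}.Infinite := by
  apply Set.infinite_of_not_bddAbove
  rintro ⟨b, hb⟩
  obtain ⟨i, hi, hPi⟩ := h (b+1)
  have := hb hPi
  omega

theorem nonincr_eventually_const (f : ℕ → ℕ) (hf : ∀ i, f (i+1) ≤ f i) :
    ∃ N, ∀ i, N ≤ i → f i = f N := by
  have hmono : ∀ i j, i ≤ j → f j ≤ f i := by
    intro i j hij
    induction j with
    | zero => have : i = 0 := by omega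
              rw [this]
    | succ m ih =>
      rcases Nat.lt_or_ge i (m+1) with h | h
      · exact (hf m).trans (ih (by omega))
      · have : i = m+1 := by omega
        rw [this]
  have hne : (Set.range f).Nonempty := ⟨f 0, 0, rfl⟩
  obtain ⟨N, hN⟩ := Nat.sInf_mem hne
  refine ⟨N, fun i hi => ?_⟩
  have h1 : f i ≤ f N := hmono N i hi
  have h2 : sInf (Set.range f) ≤ f i := Nat.sInf_le ⟨i, rfl⟩
  omega

end Helpers

namespace LiveGameGraph

open Set Classical

variable {V : Type*} [Fintype V] (Gm : LiveGameGraph V) (g r : ℕ → Set V) (K : ℕ)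
variable (hK1 : 1 ≤ K) (hrK : r K = ∅)

/-- Case analysis of the policy move. -/
theorem polspec (v : V) (hv : v ∉ Gm.chainAux g r K ∅) (h1 : v ∈ Gm.V1) (n : ℕ) :
    (Gm.hasNeed g r K v ∧ Gm.pol g r K hK1 hrK v n ∉ Gm.Yde g r K (Gm.TD g r K v) v ∧
      ((Gm.TD g r K v + 1 = K ∨ v ∉ Gm.Vl) ∨ n % 2 = 0)) ∨
    (Gm.hasNeed g r K v ∧ Gm.TD g r K v + 1 ≠ K ∧ v ∈ Gm.Vl ∧ n % 2 ≠ 0 ∧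
      Gm.pol g r K hK1 hrK v n ∉ Gm.XSs g r K (Gm.csl g r K v) v ∧
      Gm.pol g r K hK1 hrK v n = Gm.rrT v (n / 2)) ∨
    (¬ Gm.hasNeed g r K v ∧ v ∈ Gm.Vl ∧
      Gm.pol g r K hK1 hrK v n ∉ Gm.XSs g r K (mhD r K v) v ∧
      Gm.pol g r K hK1 hrK v n = Gm.rrT v n) ∨
    (¬ Gm.hasNeed g r K v ∧ v ∉ Gm.Vl ∧
      Gm.pol g r K hK1 hrK v n ∉ Gm.XSs g r K (mhD r K v) v) := by
  rw [pol, if_pos ⟨hv, h1⟩]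
  by_cases hn : Gm.hasNeed g r K v
  · rw [if_pos hn]
    by_cases hesc : Gm.TD g r K v + 1 = K ∨ v ∉ Gm.Vl
    · rw [if_pos hesc]
      exact Or.inl ⟨hn, (Gm.escT_spec g r K v hv h1 hn).2, Or.inl hesc⟩
    · rw [if_neg hesc]
      push_neg at hesc
      by_cases hpar : n % 2 = 0
      · rw [if_pos hpar]
        exact Or.inl ⟨hn, (Gm.escT_spec g r K v hv h1 hn).2, Or.inr hpar⟩
      · rw [if_neg hpar]
        refine Or.inr (Or.inl ⟨hn, hesc.1, hesc.2, hpar, ?_, rfl⟩)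
        have hcs := Gm.csl_spec g r K hrK v (by
          have := (Gm.TD_spec g r K v hn).1
          omega)
        exact Gm.safe_live g r K v hcs.2.2
          (Gm.not_need_above_TD g r K v hcs.2.1 hcs.1) _
          (Gm.rrT_live v hesc.2 _)
  · rw [if_neg hn]
    by_cases hvl : v ∈ Gm.Vl
    · rw [if_pos hvl]
      refine Or.inr (Or.inr (Or.inl ⟨hn, hvl, ?_, rfl⟩))
      have hmh := mhD_spec r K hK1 hrK v
      refine Gm.safe_live g r K v hmh.2 ?_ _ (Gm.rrT_live v hvl _)
      intro hc
      exact hn ⟨mhD r K v, hmh.1, hc⟩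
    · rw [if_neg hvl]
      refine Or.inr (Or.inr (Or.inr ⟨hn, hvl, ?_⟩))
      exact (Gm.plainT_spec g r K hK1 hrK v hv h1).2

variable (ρ0 : List V → V → V)

/-- The Player-1 spoiling strategy. -/
noncomputable def rho1 : List V → V → V :=
  fun h v => Gm.pol g r K hK1 hrK v (h.countP (fun x => decide (x = v)))

theorem rho1_strategy : Gm.Strategy1 (Gm.rho1 g r K hK1 hrK) := by
  intro h v _
  exact Gm.pol_edge g r K hK1 hrK v _

/-- The spoiling play. -/
noncomputable def spoil (v0 : V) : ℕ → V :=
  playOf Gm ρ0 (Gm.rho1 g r K hK1 hrK) v0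

theorem spoil_compliant (v0 : V) :
    Gm.Compliant ρ0 (Gm.rho1 g r K hK1 hrK) v0 (Gm.spoil g r K hK1 hrK ρ0 v0) :=
  playOf_compliant Gm ρ0 _ v0

theorem spoil_step1 (v0 : V) (i : ℕ) (h1 : Gm.spoil g r K hK1 hrK ρ0 v0 i ∈ Gm.V1) :
    Gm.spoil g r K hK1 hrK ρ0 v0 (i+1) =
      Gm.pol g r K hK1 hrK (Gm.spoil g r K hK1 hrK ρ0 v0 i)
        (cntP (Gm.spoil g r K hK1 hrK ρ0 v0) (Gm.spoil g r K hK1 hrK ρ0 v0 i) i) := by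
  have := ((Gm.spoil_compliant g r K hK1 hrK ρ0 v0).2 i).2 h1
  rw [this]
  rfl

theorem spoil_step0 (v0 : V) (hρ0 : Gm.Strategy0 ρ0) (i : ℕ)
    (h0 : Gm.spoil g r K hK1 hrK ρ0 v0 i ∈ Gm.V0) :
    Gm.E (Gm.spoil g r K hK1 hrK ρ0 v0 i) (Gm.spoil g r K hK1 hrK ρ0 v0 (i+1)) := by
  have := ((Gm.spoil_compliant g r K hK1 hrK ρ0 v0).2 i).1 h0
  rw [this]
  exact hρ0 _ _ h0

end LiveGameGraph

namespace LiveGameGraph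

open Set Classical

variable {V : Type*} [Fintype V] (Gm : LiveGameGraph V) (g r : ℕ → Set V) (K : ℕ)
variable (hK1 : 1 ≤ K) (hrK : r K = ∅) (ρ0 : List V → V → V)

theorem XSs_def (ℓ : ℕ) (v : V) :
    Gm.XSs g r K ℓ v = Gm.chainAux g r ℓ (Gm.accD g r K ℓ v) := rfl

theorem Z_le_XSs (v : V) {ℓ : ℕ} (h : ℓ ≤ K) :
    Gm.chainAux g r K ∅ ⊆ Gm.XSs g r K ℓ v := Gm.DCU g r K v ℓ h

/-- Main completeness analysis of the spoiling play. -/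
theorem completeness
    (hchain : ∀ a b, 1 ≤ a → a ≤ b → b < K → r b ⊆ r a)
    (v0 : V) (hv0 : v0 ∉ Gm.chainAux g r K ∅) (hρ0 : Gm.Strategy0 ρ0) :
    Gm.StronglyFair (Gm.spoil g r K hK1 hrK ρ0 v0) ∧
      ¬ (∃ p, 1 ≤ p ∧ p < K ∧
        (∃ N, ∀ i, N ≤ i → Gm.spoil g r K hK1 hrK ρ0 v0 i ∉ r p) ∧
        (∀ N, ∃ i, N ≤ i ∧ Gm.spoil g r K hK1 hrK ρ0 v0 i ∈ g p)) := by
  set π := Gm.spoil g r K hK1 hrK ρ0 v0 with hπdef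
  have hstep1 : ∀ i, π i ∈ Gm.V1 →
      π (i+1) = Gm.pol g r K hK1 hrK (π i) (cntP π (π i) i) :=
    fun i h1 => Gm.spoil_step1 g r K hK1 hrK ρ0 v0 i h1
  have hstep0 : ∀ i, π i ∈ Gm.V0 → Gm.E (π i) (π (i+1)) :=
    fun i h0 => Gm.spoil_step0 g r K hK1 hrK ρ0 v0 hρ0 i h0
  -- the play never enters Z
  have hD : ∀ i, π i ∉ Gm.chainAux g r K ∅ := by
    intro i
    induction i with
    | zero => exact hv0
    | succ i ih =>
      rcases Gm.V0_or_V1 (π i) with h0 | h1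
      · have he := hstep0 i h0
        have hmh := mhD_spec r K hK1 hrK (π i)
        have hnx := Gm.v0_all g r K (π i) ih h0 hmh.1 hmh.2 _ he
        intro hc
        exact hnx (Gm.Z_le_XSs g r K (π i) (by omega) hc)
      · rw [hstep1 i h1]
        rcases Gm.polspec g r K hK1 hrK (π i) ih h1 (cntP π (π i) i) with
          ⟨hn, hy, _⟩ | ⟨hn, hK', hvl, hpar, hx, _⟩ | ⟨hn, hvl, hx, _⟩ | ⟨hn, hvl, hx⟩
        · intro hc
          exact hy (Gm.Z_le_Yde g r K (π i) (Gm.TD_spec g r K (π i) hn).1 hc)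
        · intro hc
          have hcs := Gm.csl_spec g r K hrK (π i) (by
            have := (Gm.TD_spec g r K (π i) hn).1
            omega)
          exact hx (Gm.Z_le_XSs g r K (π i) (by omega) hc)
        · intro hc
          exact hx (Gm.Z_le_XSs g r K (π i) (mhD_spec r K hK1 hrK (π i)).1.le hc)
        · intro hc
          exact hx (Gm.Z_le_XSs g r K (π i) (mhD_spec r K hK1 hrK (π i)).1.le hc)
  have hID : ∀ w ∈ InfVis π, w ∉ Gm.chainAux g r K ∅ := by
    intro w hw
    obtain ⟨i, _, hi⟩ := infvis_occurs π hw 0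
    rw [← hi]; exact hD i
  -- one-step control lemma
  have hctlA : ∀ i j, j < K → π i ∉ r (j+1) →
      (π i ∈ Gm.V1 → Gm.hasNeed g r K (π i) → Gm.TD g r K (π i) < j) →
      Gm.cD g r K j (π (i+1)) ≤ Gm.cD g r K j (π i) := by
    intro i j hjK hrel hTD
    rcases Gm.V0_or_V1 (π i) with h0 | h1
    · have he := hstep0 i h0
      have hnx := Gm.v0_all g r K (π i) (hD i) h0 hjK hrel _ he
      rw [XSs_def] at hnx
      exact Gm.DCTL g r K (π i) (hD i) (by omega) _ hnx
    · rw [hstep1 i h1]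
      rcases Gm.polspec g r K hK1 hrK (π i) (hD i) h1 (cntP π (π i) i) with
        ⟨hn, hy, _⟩ | ⟨hn, hK', hvl, hpar, hx, _⟩ | ⟨hn, hvl, hx, _⟩ | ⟨hn, hvl, hx⟩
      · have hTDlt := hTD h1 hn
        have h2 := (Gm.DESCAPE g r K (π i) (hD i) (Gm.TD_spec g r K (π i) hn).1 _ hy).le
        exact Gm.DPROJ g r K (π i) _ _ j (by omega) h2
      · have hTDlt := hTD h1 hn
        have hcslle : Gm.csl g r K (π i) ≤ j :=
          Nat.sInf_le ⟨hTDlt, hjK, hrel⟩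
        rw [XSs_def] at hx
        have hcs := Gm.csl_spec g r K hrK (π i) (by
          have := (Gm.TD_spec g r K (π i) hn).1
          omega)
        have h2 := Gm.DCTL g r K (π i) (hD i) (show Gm.csl g r K (π i) ≤ K by omega) _ hx
        exact Gm.DPROJ g r K (π i) _ _ j hcslle h2
      all_goals {
        have hmhle : mhD r K (π i) ≤ j := Nat.sInf_le ⟨hjK, hrel⟩
        rw [XSs_def] at hx
        have h2 := Gm.DCTL g r K (π i) (hD i)
          (show mhD r K (π i) ≤ K from (mhD_spec r K hK1 hrK (π i)).1.le) _ hx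
        exact Gm.DPROJ g r K (π i) _ _ j hmhle h2 }
  -- top-level control: the top code never increases
  have hctlTop : ∀ i, Gm.cD g r K (K-1) (π (i+1)) ≤ Gm.cD g r K (K-1) (π i) := by
    intro i
    rcases Gm.V0_or_V1 (π i) with h0 | h1
    · have he := hstep0 i h0
      have hmh := mhD_spec r K hK1 hrK (π i)
      have hnx := Gm.v0_all g r K (π i) (hD i) h0 hmh.1 hmh.2 _ he
      rw [XSs_def] at hnx
      have h2 := Gm.DCTL g r K (π i) (hD i) (by omega) _ hnx
      exact Gm.DPROJ g r K (π i) _ _ (K-1) (by omega) h2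
    · rw [hstep1 i h1]
      rcases Gm.polspec g r K hK1 hrK (π i) (hD i) h1 (cntP π (π i) i) with
        ⟨hn, hy, _⟩ | ⟨hn, hK', hvl, hpar, hx, _⟩ | ⟨hn, hvl, hx, _⟩ | ⟨hn, hvl, hx⟩
      · have h2 := (Gm.DESCAPE g r K (π i) (hD i) (Gm.TD_spec g r K (π i) hn).1 _ hy).le
        have := (Gm.TD_spec g r K (π i) hn).1
        exact Gm.DPROJ g r K (π i) _ _ (K-1) (by omega) h2
      · rw [XSs_def] at hx
        have hcs := Gm.csl_spec g r K hrK (π i) (by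
          have := (Gm.TD_spec g r K (π i) hn).1
          omega)
        have h2 := Gm.DCTL g r K (π i) (hD i) (show Gm.csl g r K (π i) ≤ K by omega) _ hx
        exact Gm.DPROJ g r K (π i) _ _ (K-1) (by omega) h2
      all_goals {
        rw [XSs_def] at hx
        have hmh := mhD_spec r K hK1 hrK (π i)
        have h2 := Gm.DCTL g r K (π i) (hD i)
          (show mhD r K (π i) ≤ K by omega) _ hx
        exact Gm.DPROJ g r K (π i) _ _ (K-1) (by omega) h2 }
  -- escape visits happen unboundedly often for needy infinitely-visited vertices
  have hesc : ∀ w ∈ InfVis π, w ∈ Gm.V1 → Gm.hasNeed g r K w → ∀ N, ∃ i, N ≤ i ∧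
      π i = w ∧ π (i+1) ∉ Gm.Yde g r K (Gm.TD g r K w) w := by
    intro w hwI h1 hn N
    have hwD : w ∉ Gm.chainAux g r K ∅ := hID w hwI
    by_cases halw : Gm.TD g r K w + 1 = K ∨ w ∉ Gm.Vl
    · obtain ⟨i, hi, hocc⟩ := infvis_occurs π hwI N
      refine ⟨i, hi, hocc, ?_⟩
      have hπw : π (i+1) = Gm.pol g r K hK1 hrK w (cntP π w i) := by
        rw [hstep1 i (by rw [hocc]; exact h1), hocc]
      rw [hπw]
      rcases Gm.polspec g r K hK1 hrK w hwD h1 (cntP π w i) with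
        ⟨_, hy, _⟩ | ⟨_, hK', hvl, _, _, _⟩ | ⟨hn', _, _, _⟩ | ⟨hn', _, _⟩
      · exact hy
      · exact absurd halw (by
          intro hh
          rcases hh with hh | hh
          · exact hK' hh
          · exact hh hvl)
      · exact absurd hn hn'
      · exact absurd hn hn'
    · obtain ⟨i, hi, hocc, hcnt⟩ := visits_with_counter π w hwI {n | n % 2 = 0}
        (fun N' => ⟨2*N', by omega, by simp [Nat.mul_mod_right]⟩) N
      refine ⟨i, hi, hocc, ?_⟩
      have hπw : π (i+1) = Gm.pol g r K hK1 hrK w (cntP π w i) := by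
        rw [hstep1 i (by rw [hocc]; exact h1), hocc]
      rw [hπw]
      rcases Gm.polspec g r K hK1 hrK w hwD h1 (cntP π w i) with
        ⟨_, hy, _⟩ | ⟨_, _, _, hpar, _, _⟩ | ⟨hn', _, _, _⟩ | ⟨hn', _, _⟩
      · exact hy
      · exact absurd hcnt hpar
      · exact absurd hn hn'
      · exact absurd hn hn'
  -- strong transition fairness of the spoiling play
  have hfairP : Gm.StronglyFair π := by
    intro v w hel hinf
    have hvI : v ∈ InfVis π := hinf
    have hv1 : v ∈ Gm.V1 := (Gm.live_sub v w hel).1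
    have hvl : v ∈ Gm.Vl := ⟨w, hel⟩
    have hvD : v ∉ Gm.chainAux g r K ∅ := hID v hvI
    obtain ⟨idx, hidxlt, hidx⟩ := Gm.rrT_hit v w hel
    have hLpos : 1 ≤ (Gm.liveL v).length := by omega
    by_cases hn : Gm.hasNeed g r K v
    · by_cases halw : Gm.TD g r K v + 1 = K
      · exfalso
        obtain ⟨N, hNc⟩ := nonincr_eventually_const (fun i => Gm.cD g r K (K-1) (π i)) hctlTop
        obtain ⟨i, hi, hocc, hy⟩ := hesc v hvI hv1 hn N
        have hlt := Gm.DESCAPE g r K v hvD (Gm.TD_spec g r K v hn).1 _ hy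
        have hTDK : Gm.TD g r K v = K - 1 := by omega
        rw [hTDK, ← hocc] at hlt
        have e1 := hNc i hi
        have e2 := hNc (i+1) (by omega)
        omega
      · apply unbounded_infinite
        intro N
        have hCprop : ∀ N', ∃ c, N' ≤ c ∧
            c ∈ {n | n % 2 ≠ 0 ∧ (n/2) % (Gm.liveL v).length = idx} := by
          intro N'
          refine ⟨2*(idx + (Gm.liveL v).length * N') + 1, ?_, ?_, ?_⟩
          · have : N' ≤ (Gm.liveL v).length * N' := Nat.le_mul_of_pos_left N' (by omega)
            omega
          · omega
          · have h2 : (2*(idx + (Gm.liveL v).length * N') + 1) / 2 =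
                idx + (Gm.liveL v).length * N' := by omega
            rw [h2, Nat.add_mul_mod_self_left, Nat.mod_eq_of_lt hidxlt]
        obtain ⟨i, hi, hocc, hcnt⟩ := visits_with_counter π v hvI
          {n | n % 2 ≠ 0 ∧ (n/2) % (Gm.liveL v).length = idx} hCprop N
        refine ⟨i, hi, hocc, ?_⟩
        have hπw : π (i+1) = Gm.pol g r K hK1 hrK v (cntP π v i) := by
          rw [hstep1 i (by rw [hocc]; exact hv1), hocc]
        rw [hπw]
        rcases Gm.polspec g r K hK1 hrK v hvD hv1 (cntP π v i) with
          ⟨_, _, hc3⟩ | ⟨_, _, _, _, _, heq⟩ | ⟨hn', _, _, _⟩ | ⟨hn', _, _⟩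
        · exfalso
          rcases hc3 with hc3 | hc3
          · rcases hc3 with hc3 | hc3
            · exact halw hc3
            · exact hc3 hvl
          · exact hcnt.1 hc3
        · rw [heq]
          exact hidx _ hcnt.2
        · exact absurd hn hn'
        · exact absurd hn hn'
    · apply unbounded_infinite
      intro N
      have hCprop : ∀ N', ∃ c, N' ≤ c ∧ c ∈ {n | n % (Gm.liveL v).length = idx} := by
        intro N'
        refine ⟨idx + (Gm.liveL v).length * N', ?_, ?_⟩
        · have : N' ≤ (Gm.liveL v).length * N' := Nat.le_mul_of_pos_left N' (by omega)
          omega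
        · show (idx + (Gm.liveL v).length * N') % (Gm.liveL v).length = idx
          rw [Nat.add_mul_mod_self_left, Nat.mod_eq_of_lt hidxlt]
      obtain ⟨i, hi, hocc, hcnt⟩ := visits_with_counter π v hvI
        {n | n % (Gm.liveL v).length = idx} hCprop N
      refine ⟨i, hi, hocc, ?_⟩
      have hπw : π (i+1) = Gm.pol g r K hK1 hrK v (cntP π v i) := by
        rw [hstep1 i (by rw [hocc]; exact hv1), hocc]
      rw [hπw]
      rcases Gm.polspec g r K hK1 hrK v hvD hv1 (cntP π v i) with
        ⟨hn', _, _⟩ | ⟨hn', _, _, _, _, _⟩ | ⟨_, _, _, heq⟩ | ⟨_, hvl', _⟩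
      · exact absurd hn' hn
      · exact absurd hn' hn
      · rw [heq]
        exact hidx _ hcnt
      · exact absurd hvl hvl'
  -- the dual descent
  obtain ⟨Nt, hNt⟩ := infvis_tail π
  have hDDESC : ∀ j, j ≤ K →
      (∀ w ∈ InfVis π, ∀ m, j ≤ m → m < K → w ∉ r (m+1) ∧ ¬ Gm.needD g r K m w) →
      ∃ js, js ≤ j ∧ (∀ m, js ≤ m → m < K → ∀ w ∈ InfVis π, w ∉ g (m+1)) ∧
        (1 ≤ js → ∃ x ∈ InfVis π, x ∈ r js) := by
    intro j
    induction j with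
    | zero =>
      intro _ hclean
      refine ⟨0, le_rfl, ?_, by omega⟩
      intro m hm hmK w hw
      intro hg
      exact (hclean w hw m hm hmK).2 ⟨(hclean w hw m hm hmK).1, Or.inl hg⟩
    | succ j ih =>
      intro hjK hclean
      have hTDlt : ∀ w ∈ InfVis π, Gm.hasNeed g r K w → Gm.TD g r K w < j + 1 := by
        intro w hw hn
        by_contra hc
        push_neg at hc
        have hspec := Gm.TD_spec g r K w hn
        exact (hclean w hw (Gm.TD g r K w) hc hspec.1).2 hspec.2
      by_cases hr : ∃ x ∈ InfVis π, x ∈ r (j+1)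
      · refine ⟨j+1, le_rfl, ?_, fun _ => hr⟩
        intro m hm hmK w hw hg
        exact (hclean w hw m hm hmK).2 ⟨(hclean w hw m hm hmK).1, Or.inl hg⟩
      · push_neg at hr
        -- cleaning of level j+1
        set S : Set ℕ := Gm.cD g r K j '' InfVis π with hS
        have hSne : S.Nonempty := (infvis_nonempty π).image _
        have hBmem := Nat.sInf_mem hSne
        set B := sInf S with hB
        obtain ⟨u0, hu0I, hu0c⟩ := hBmem
        have hlower : ∀ w ∈ InfVis π, B ≤ Gm.cD g r K j w :=
          fun w hw => Nat.sInf_le ⟨w, hw, rfl⟩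
        -- needy V1 vertices at the minimum have top need below j
        have hbeta : ∀ w ∈ InfVis π, Gm.cD g r K j w = B → w ∈ Gm.V1 →
            Gm.hasNeed g r K w → Gm.TD g r K w < j := by
          intro w hwI hwc h1 hn
          by_contra hcon
          have hTDj : Gm.TD g r K w = j := by
            have := hTDlt w hwI hn
            omega
          obtain ⟨i, hi, hocc, hy⟩ := hesc w hwI h1 hn Nt
          have hnext : π (i+1) ∈ InfVis π := hNt (i+1) (by omega)
          have hlt := Gm.DESCAPE g r K w (hID w hwI) (Gm.TD_spec g r K w hn).1 _ hy
          rw [hTDj, hwc] at hlt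
          have := hlower _ hnext
          omega
        -- V0 vertices at the minimum are not in g (j+1)
        have hgamma : ∀ w ∈ InfVis π, Gm.cD g r K j w = B → w ∈ Gm.V0 →
            w ∉ g (j+1) := by
          intro w hwI hwc h0 hg
          obtain ⟨i, hi, hocc⟩ := infvis_occurs π hwI Nt
          have hnext : π (i+1) ∈ InfVis π := hNt (i+1) (by omega)
          have h0' : π i ∈ Gm.V0 := by rw [hocc]; exact h0
          have he := hstep0 i h0'
          have hy := Gm.v0_g g r K (π i) (hD i) h0' (ℓ := j) (by omega)
            (by rw [hocc]; exact hr w hwI) (by rw [hocc]; exact hg) _ he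
          have hlt := Gm.DESCAPE g r K (π i) (hD i) (show j < K by omega) _ hy
          rw [hocc, hwc] at hlt
          have := hlower _ hnext
          omega
        -- trap on the minimal-code set
        have htrap : InfVis π ⊆ {v | v ∈ InfVis π ∧ Gm.cD g r K j v = B} := by
          apply infvis_trap π _ Nt
          · intro i hi hC
            have hI' : π (i+1) ∈ InfVis π := hNt (i+1) (by omega)
            refine ⟨hI', le_antisymm ?_ (hlower _ hI')⟩
            have h1 : Gm.cD g r K j (π (i+1)) ≤ Gm.cD g r K j (π i) := by
              apply hctlA i j (by omega) (hr _ hC.1)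
              intro h1 hn
              exact hbeta _ hC.1 hC.2 h1 hn
            rw [hC.2] at h1
            exact h1
          · obtain ⟨i0, hi0, hocc⟩ := infvis_occurs π hu0I Nt
            exact ⟨i0, hi0, by rw [hocc]; exact ⟨hu0I, hu0c⟩⟩
        -- all infinitely visited vertices are clean at level j+1
        have hcleanj : ∀ w ∈ InfVis π, w ∉ r (j+1) ∧ ¬ Gm.needD g r K j w := by
          intro w hwI
          have hwB := (htrap hwI).2
          refine ⟨hr w hwI, ?_⟩
          intro hneed
          rcases Gm.V0_or_V1 w with h0 | h1
          · rcases hneed.2 with hg | hl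
            · exact hgamma w hwI hwB h0 hg
            · exact Gm.V0_not_lpre w h0 _ hl
          · have hn : Gm.hasNeed g r K w := ⟨j, by omega, hneed⟩
            have := hbeta w hwI hwB h1 hn
            have := Gm.TD_ge g r K w (show j < K by omega) hneed
            omega
        have hcleanext : ∀ w ∈ InfVis π, ∀ m, j ≤ m → m < K →
            w ∉ r (m+1) ∧ ¬ Gm.needD g r K m w := by
          intro w hw m hm hmK
          rcases Nat.lt_or_ge m (j+1) with hc | hc
          · have hmj : m = j := by omega
            rw [hmj]
            exact hcleanj w hw
          · exact hclean w hw m hc hmK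
        obtain ⟨js, hjs1, hjs2, hjs3⟩ := ih (by omega) hcleanext
        exact ⟨js, by omega, hjs2, hjs3⟩
  -- conclude: the winning condition fails
  refine ⟨hfairP, ?_⟩
  rintro ⟨p, hp1, hpK, ⟨N, hN⟩, hio⟩
  obtain ⟨js, hjs, hgfree, hrhit⟩ := hDDESC K le_rfl
    (fun w hw m hm hmK => absurd hmK (by omega))
  rcases Nat.lt_or_ge js p with hc | hc
  · -- p is above the stop level: g p is never visited in the limit
    obtain ⟨i, hi, hig⟩ := hio Nt
    have hiI : π i ∈ InfVis π := hNt i hi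
    have : π i ∉ g (p-1+1) := hgfree (p-1) (by omega) (by omega) _ hiI
    have hpp : p - 1 + 1 = p := by omega
    rw [hpp] at this
    exact this hig
  · -- p is at or below the stop level: r p is visited infinitely often
    obtain ⟨x, hxI, hxr⟩ := hrhit (by omega)
    have hjsK : js < K := by
      rcases Nat.lt_or_ge js K with h | h
      · exact h
      · exfalso
        have : js = K := by omega
        rw [this, hrK] at hxr
        exact hxr
    have hxp : x ∈ r p := hchain p js hp1 hc hjsK hxr
    obtain ⟨i, hi, hocc⟩ := infvis_occurs π hxI N
    exact hN i hi (by rw [hocc]; exact hxp)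

end LiveGameGraph

namespace LiveGameGraph

open Set Classical

variable {V : Type*}

theorem chainAux_congr (Gm : LiveGameGraph V) (g r g' r' : ℕ → Set V) :
    ∀ j, (∀ m, 1 ≤ m → m ≤ j → g m = g' m) → (∀ m, 1 ≤ m → m ≤ j → r m = r' m) →
      ∀ acc, Gm.chainAux g r j acc = Gm.chainAux g' r' j acc := by
  intro j
  induction j with
  | zero => intro _ _ acc; rfl
  | succ j ih =>
    intro hg hr acc
    rw [chainAux_succ, chainAux_succ]
    apply congrArg gfpSet
    funext Y
    apply congrArg lfpSet
    funext X
    have hC : Gm.Cterm g r Y X (j+1) = Gm.Cterm g' r' Y X (j+1) := by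
      rw [Cterm, Cterm, hg (j+1) (by omega) le_rfl, hr (j+1) (by omega) le_rfl]
    rw [hC]
    exact ih (fun m h1 h2 => hg m h1 (by omega)) (fun m h1 h2 => hr m h1 (by omega)) _

theorem chainZ_eq (Gm : LiveGameGraph V) (Gp Rp : ℕ → Set V) (k : ℕ) :
    Gm.chainZ Gp Rp k =
      Gm.chainAux (fun m => if m = k+1 then ∅ else Gp m)
        (fun m => if m = k+1 then ∅ else Rp m) (k+1) ∅ := by
  set g' : ℕ → Set V := fun m => if m = k+1 then ∅ else Gp m with hg'
  set r' : ℕ → Set V := fun m => if m = k+1 then ∅ else Rp m with hr'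
  rw [chainZ, chainAux_succ]
  apply congrArg gfpSet
  funext Y
  apply congrArg lfpSet
  funext X
  have hset : ((∅ : Set V)ᶜ) ∩ (((∅ : Set V) ∩ Gm.cpre Y) ∪ Gm.apre Y X) =
      (∅ : Set V) ∪ Gm.Cterm g' r' Y X (k+1) := by
    rw [Cterm]
    have h1 : g' (k+1) = ∅ := if_pos rfl
    have h2 : r' (k+1) = ∅ := if_pos rfl
    rw [h1, h2]
    simp
  rw [hset]
  apply chainAux_congr
  · intro m h1 h2
    rw [hg']
    simp only
    rw [if_neg (by omega)]
  · intro m h1 h2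
    rw [hr']
    simp only
    rw [if_neg (by omega)]

end LiveGameGraph

theorem fair_adversarial_rabin_chain' {V : Type*} [Fintype V]
    (Gm : LiveGameGraph V) (k : ℕ) (Gp Rp : ℕ → Set V)
    (hchainR : ∀ j, 1 ≤ j → j < k → Rp (j + 1) ⊆ Rp j)
    (hchainG : ∀ j, 1 ≤ j → j < k → Gp (j + 1) ⊆ Gp j)
    (Zstar : Set V) (hZ : Zstar = Gm.chainZ Gp Rp k) :
    Zstar = Gm.WinningRegion
        (fun π => ∃ j ∈ Finset.Icc 1 k,
          (∃ N, ∀ i ≥ N, π i ∉ Rp j) ∧ (∀ N, ∃ i ≥ N, π i ∈ Gp j)) ∧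
    ∃ σ : V → V, (∀ v ∈ Gm.V0, Gm.E v (σ v)) ∧
      ∀ v0 ∈ Zstar,
        Gm.WinsFrom
          (fun π => ∃ j ∈ Finset.Icc 1 k,
            (∃ N, ∀ i ≥ N, π i ∉ Rp j) ∧ (∀ N, ∃ i ≥ N, π i ∈ Gp j))
          (fun _ v => σ v) v0 := by
  classical
  set g : ℕ → Set V := fun m => if m = k+1 then ∅ else Gp m with hg
  set r : ℕ → Set V := fun m => if m = k+1 then ∅ else Rp m with hr
  set K : ℕ := k + 1 with hK
  have hK1 : 1 ≤ K := by omega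
  have hgK : g K = ∅ := if_pos rfl
  have hrK : r K = ∅ := if_pos rfl
  have hZeq : Zstar = Gm.chainAux g r K ∅ := by
    rw [hZ, Gm.chainZ_eq Gp Rp k]
  -- transitive chain on Rp
  have hRchain : ∀ a b, 1 ≤ a → a ≤ b → b ≤ k → Rp b ⊆ Rp a := by
    intro a b ha hab
    induction b with
    | zero => intro _; have haz : a = 0 := by omega
              rw [haz]
    | succ m ih =>
      intro hmk
      rcases Nat.lt_or_ge a (m+1) with h | h
      · exact (hchainR m (by omega) (by omega)).trans (ih (by omega) (by omega))
      · have : a = m+1 := by omega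
        rw [this]
  have hrchain : ∀ a b, 1 ≤ a → a ≤ b → b < K → r b ⊆ r a := by
    intro a b ha hab hbK
    have h1 : r b = Rp b := if_neg (by omega)
    have h2 : r a = Rp a := if_neg (by omega)
    rw [h1, h2]
    exact hRchain a b ha hab (by omega)
  -- the memoryless strategy
  set σ := Gm.sig g r K with hσ
  have hσedge : ∀ v ∈ Gm.V0, Gm.E v (σ v) := fun v _ => Gm.sig_edge g r K v
  -- soundness: σ wins from every vertex of Zstar
  have hwins : ∀ v0 ∈ Zstar,
      Gm.WinsFrom
        (fun π => ∃ j ∈ Finset.Icc 1 k,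
          (∃ N, ∀ i ≥ N, π i ∉ Rp j) ∧ (∀ N, ∃ i ≥ N, π i ∈ Gp j))
        (fun _ v => σ v) v0 := by
    intro v0 hv0
    rw [hZeq] at hv0
    refine ⟨fun h v hv => hσedge v hv, ?_⟩
    intro ρ1 hρ1 π hcomp hfair
    obtain ⟨j', h1, h2, hG, ⟨N, hN⟩⟩ :=
      Gm.soundness g r K hgK v0 hv0 ρ1 hρ1 π hcomp hfair
    refine ⟨j', Finset.mem_Icc.2 ⟨h1, by omega⟩, ⟨N, ?_⟩, ?_⟩
    · intro i hi
      obtain ⟨m, hm1, hm2, hnot⟩ := hN i hi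
      have hmr : r m = Rp m := if_neg (by omega)
      rw [hmr] at hnot
      intro hc
      exact hnot (hRchain m j' hm1 hm2 (by omega) hc)
    · intro N'
      obtain ⟨i, hi, hmem⟩ := hG N'
      have : g j' = Gp j' := if_neg (by omega)
      rw [this] at hmem
      exact ⟨i, hi, hmem⟩
  constructor
  · apply subset_antisymm
    · intro v0 hv0
      exact ⟨fun _ v => σ v, hwins v0 hv0⟩
    · -- completeness
      intro v0 hv0
      by_contra hc
      rw [hZeq] at hc
      obtain ⟨ρ0, hρ0, hwin⟩ := hv0
      obtain ⟨hfairP, hnophi⟩ :=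
        Gm.completeness g r K hK1 hrK ρ0 hrchain v0 hc hρ0
      have hphi := hwin (Gm.rho1 g r K hK1 hrK) (Gm.rho1_strategy g r K hK1 hrK)
        (Gm.spoil g r K hK1 hrK ρ0 v0)
        (Gm.spoil_compliant g r K hK1 hrK ρ0 v0) hfairP
      obtain ⟨j, hjIcc, ⟨N, hN⟩, hio⟩ := hphi
      rw [Finset.mem_Icc] at hjIcc
      apply hnophi
      refine ⟨j, hjIcc.1, by omega, ⟨N, ?_⟩, ?_⟩
      · intro i hi
        have : r j = Rp j := if_neg (by omega)
        rw [this]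
        exact hN i hi
      · intro N'
        obtain ⟨i, hi, hmem⟩ := hio N'
        have : g j = Gp j := if_neg (by omega)
        rw [this]
        exact ⟨i, hi, hmem⟩
  · exact ⟨σ, hσedge, hwins⟩

/-- for a Rabin chain condition, the chain fixpoint equals the
winning region of Player 0 in the fair adversarial Rabin game, and a memoryless
winning Player-0 strategy exists on it. -/
theorem fair_adversarial_rabin_chain {V : Type*} [Fintype V]
    (Gm : LiveGameGraph V) (k : ℕ) (Gp Rp : ℕ → Set V)
    (hchainR : ∀ j, 1 ≤ j → j < k → Rp (j + 1) ⊆ Rp j)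
    (hchainG : ∀ j, 1 ≤ j → j < k → Gp (j + 1) ⊆ Gp j)
    (Zstar : Set V) (hZ : Zstar = Gm.chainZ Gp Rp k) :
    Zstar = Gm.WinningRegion
        (fun π => ∃ j ∈ Finset.Icc 1 k,
          (∃ N, ∀ i ≥ N, π i ∉ Rp j) ∧ (∀ N, ∃ i ≥ N, π i ∈ Gp j)) ∧
    ∃ σ : V → V, (∀ v ∈ Gm.V0, Gm.E v (σ v)) ∧
      ∀ v0 ∈ Zstar,
        Gm.WinsFrom
          (fun π => ∃ j ∈ Finset.Icc 1 k,
            (∃ N, ∀ i ≥ N, π i ∉ Rp j) ∧ (∀ N, ∃ i ≥ N, π i ∈ Gp j))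
          (fun _ v => σ v) v0 := by
  exact fair_adversarial_rabin_chain' Gm k Gp Rp hchainR hchainG Zstar hZ
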